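/- arXiv:0801.0658 — 8 statements merged into one kernel-verified Lean document; each statement's English description precedes it below -/
import Mathlib

section
/- For every odd n ≥ 11, the sequence π = ((n−1)^2, 4^3, 3^{n−5}) of n terms is graphic, has σ(π) = 5n − 5, and is not potentially K_{3,3}-graphic. -/
set_option maxHeartbeats 1000000


/-- `π` is the degree sequence (as a multiset) of the simple graph `G`. -/
def IsDegSeqOf {V : Type} [Fintype V] (G : SimpleGraph V) (π : List ℕ) : Prop :=
  Multiset.map (fun v => (G.neighborSet v).ncard) Finset.univ.val = (π : Multiset ℕ)

/-- `π` is graphic: it is realized by some simple graph on `π.length` vertices. -/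
def IsGraphic (π : List ℕ) : Prop :=
  ∃ G : SimpleGraph (Fin π.length), IsDegSeqOf G π

/-- `π` is potentially `H`-graphic: some realization of `π` contains a copy of `H`
as a subgraph (an injective graph homomorphism from `H`). -/
def PotentiallyGraphic {W : Type} (H : SimpleGraph W) (π : List ℕ) : Prop :=
  ∃ G : SimpleGraph (Fin π.length), IsDegSeqOf G π ∧ ∃ f : H →g G, Function.Injective f

/-- The complete bipartite graph `K_{3,3}`. -/
def K33 : SimpleGraph (Fin 3 ⊕ Fin 3) := completeBipartiteGraph (Fin 3) (Fin 3)

/-- `K_6 − C_6`, the complement of the 6-cycle. -/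
def K6mC6 : SimpleGraph (Fin 6) := (SimpleGraph.cycleGraph 6)ᶜ

def lowS (a b : ℕ) : Prop :=
  (a=2∧b=3)∨(a=3∧b=4)∨(a=2∧b=5)∨(a=4∧b=6)∨(7≤a ∧ a%2=1 ∧ b=a+1)

def myG (n : ℕ) : SimpleGraph (Fin n) where
  Adj v w := v.val ≠ w.val ∧ (v.val < 2 ∨ w.val < 2 ∨ lowS v.val w.val ∨ lowS w.val v.val)
  symm := by
    constructor; rintro v w ⟨h1, h2⟩
    exact ⟨fun e => h1 e.symm, by tauto⟩
  loopless := by constructor; rintro v ⟨h, -⟩; exact h rfl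

lemma myG_adj (n : ℕ) (v w : Fin n) : (myG n).Adj v w ↔
    (v.val ≠ w.val ∧ (v.val < 2 ∨ w.val < 2 ∨ lowS v.val w.val ∨ lowS w.val v.val)) := Iff.rfl

lemma ncard3 {α : Type*} {x y z : α} (h1 : x≠y) (h2 : x≠z) (h3 : y≠z) :
    ({x,y,z} : Set α).ncard = 3 := by
  rw [Set.ncard_insert_of_notMem (by simp [h1, h2]) (Set.toFinite _), Set.ncard_pair h3]

lemma ncard4 {α : Type*} {x y z w : α} (h1 : x≠y) (h2 : x≠z) (h3 : x≠w) (h4 : y≠z)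
    (h5 : y≠w) (h6 : z≠w) : ({x,y,z,w} : Set α).ncard = 4 := by
  rw [Set.ncard_insert_of_notMem (by simp [h1, h2, h3]) (Set.toFinite _), ncard3 h4 h5 h6]

lemma ncard5 {α : Type*} {x y z w u : α} (h1 : x≠y) (h2 : x≠z) (h3 : x≠w) (h4 : x≠u)
    (h5 : y≠z) (h6 : y≠w) (h7 : y≠u) (h8 : z≠w) (h9 : z≠u) (h10 : w≠u) :
    ({x,y,z,w,u} : Set α).ncard = 5 := by
  rw [Set.ncard_insert_of_notMem (by simp [h1, h2, h3, h4]) (Set.toFinite _),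
    ncard4 h5 h6 h7 h8 h9 h10]

lemma deg_eq (n : ℕ) (hn : 11 ≤ n) (h2 : n % 2 = 1) (v : Fin n) :
    ((myG n).neighborSet v).ncard = if v.val < 2 then n-1 else if v.val < 5 then 4 else 3 := by
  have hvn := v.isLt
  by_cases hv : v.val < 2
  · have hset : (myG n).neighborSet v = {v}ᶜ := by
      ext w
      simp only [SimpleGraph.mem_neighborSet, myG_adj, lowS, Set.mem_compl_iff,
        Set.mem_singleton_iff, Fin.ext_iff]
      omega
    have hcompl := Set.ncard_add_ncard_compl ({v} : Set (Fin n))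
    rw [Set.ncard_singleton, Nat.card_eq_fintype_card, Fintype.card_fin] at hcompl
    simp only [hv, if_pos, hset]
    omega
  simp only [if_neg hv]
  have hext : ∀ (S : Set (Fin n)), (∀ w, ((myG n).Adj v w ↔ w ∈ S)) → (myG n).neighborSet v = S := by
    intro S h; ext w; rw [SimpleGraph.mem_neighborSet, h]
  by_cases e2 : v.val = 2
  · have hset : (myG n).neighborSet v = {⟨0, by omega⟩, ⟨1, by omega⟩, ⟨3, by omega⟩, ⟨5, by omega⟩} := by
      apply hext; intro w
      simp only [myG_adj, lowS, Set.mem_insert_iff, Set.mem_singleton_iff, Fin.ext_iff]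
      omega
    rw [hset, ncard4 (by simp only [ne_eq, Fin.ext_iff]; omega) (by simp only [ne_eq, Fin.ext_iff]; omega) (by simp only [ne_eq, Fin.ext_iff]; omega)
      (by simp only [ne_eq, Fin.ext_iff]; omega) (by simp only [ne_eq, Fin.ext_iff]; omega) (by simp only [ne_eq, Fin.ext_iff]; omega), if_pos (by omega)]
  by_cases e3 : v.val = 3
  · have hset : (myG n).neighborSet v = {⟨0, by omega⟩, ⟨1, by omega⟩, ⟨2, by omega⟩, ⟨4, by omega⟩} := by
      apply hext; intro w
      simp only [myG_adj, lowS, Set.mem_insert_iff, Set.mem_singleton_iff, Fin.ext_iff]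
      omega
    rw [hset, ncard4 (by simp only [ne_eq, Fin.ext_iff]; omega) (by simp only [ne_eq, Fin.ext_iff]; omega) (by simp only [ne_eq, Fin.ext_iff]; omega)
      (by simp only [ne_eq, Fin.ext_iff]; omega) (by simp only [ne_eq, Fin.ext_iff]; omega) (by simp only [ne_eq, Fin.ext_iff]; omega), if_pos (by omega)]
  by_cases e4 : v.val = 4
  · have hset : (myG n).neighborSet v = {⟨0, by omega⟩, ⟨1, by omega⟩, ⟨3, by omega⟩, ⟨6, by omega⟩} := by
      apply hext; intro w
      simp only [myG_adj, lowS, Set.mem_insert_iff, Set.mem_singleton_iff, Fin.ext_iff]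
      omega
    rw [hset, ncard4 (by simp only [ne_eq, Fin.ext_iff]; omega) (by simp only [ne_eq, Fin.ext_iff]; omega) (by simp only [ne_eq, Fin.ext_iff]; omega)
      (by simp only [ne_eq, Fin.ext_iff]; omega) (by simp only [ne_eq, Fin.ext_iff]; omega) (by simp only [ne_eq, Fin.ext_iff]; omega), if_pos (by omega)]
  by_cases e5 : v.val = 5
  · have hset : (myG n).neighborSet v = {⟨0, by omega⟩, ⟨1, by omega⟩, ⟨2, by omega⟩} := by
      apply hext; intro w
      simp only [myG_adj, lowS, Set.mem_insert_iff, Set.mem_singleton_iff, Fin.ext_iff]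
      omega
    rw [hset, ncard3 (by simp only [ne_eq, Fin.ext_iff]; omega) (by simp only [ne_eq, Fin.ext_iff]; omega) (by simp only [ne_eq, Fin.ext_iff]; omega),
      if_neg (by omega)]
  by_cases e6 : v.val = 6
  · have hset : (myG n).neighborSet v = {⟨0, by omega⟩, ⟨1, by omega⟩, ⟨4, by omega⟩} := by
      apply hext; intro w
      simp only [myG_adj, lowS, Set.mem_insert_iff, Set.mem_singleton_iff, Fin.ext_iff]
      omega
    rw [hset, ncard3 (by simp only [ne_eq, Fin.ext_iff]; omega) (by simp only [ne_eq, Fin.ext_iff]; omega) (by simp only [ne_eq, Fin.ext_iff]; omega),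
      if_neg (by omega)]
  have e7 : 7 ≤ v.val := by omega
  by_cases hpar : v.val % 2 = 1
  · have hset : (myG n).neighborSet v = {⟨0, by omega⟩, ⟨1, by omega⟩, ⟨v.val + 1, by omega⟩} := by
      apply hext; intro w
      simp only [myG_adj, lowS, Set.mem_insert_iff, Set.mem_singleton_iff, Fin.ext_iff]
      omega
    rw [hset, ncard3 (by simp only [ne_eq, Fin.ext_iff]; omega) (by simp only [ne_eq, Fin.ext_iff]; omega) (by simp only [ne_eq, Fin.ext_iff]; omega),
      if_neg (by omega)]
  · have hset : (myG n).neighborSet v = {⟨0, by omega⟩, ⟨1, by omega⟩, ⟨v.val - 1, by omega⟩} := by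
      apply hext; intro w
      simp only [myG_adj, lowS, Set.mem_insert_iff, Set.mem_singleton_iff, Fin.ext_iff]
      omega
    rw [hset, ncard3 (by simp only [ne_eq, Fin.ext_iff]; omega) (by simp only [ne_eq, Fin.ext_iff]; omega) (by simp only [ne_eq, Fin.ext_iff]; omega),
      if_neg (by omega)]

lemma degseq (n : ℕ) (hn : 11 ≤ n) (h2 : n % 2 = 1) :
    Multiset.map (fun v => ((myG n).neighborSet v).ncard) Finset.univ.val
      = ((List.replicate 2 (n-1) ++ List.replicate 3 4 ++ List.replicate (n-5) 3 : List ℕ) : Multiset ℕ) := by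
  have huniv : (Finset.univ : Finset (Fin n)).val = ↑(List.finRange n) := rfl
  rw [huniv, Multiset.map_coe]
  apply congrArg
  apply List.ext_getElem
  · simp; omega
  intro i hi1 hi2
  rw [List.getElem_map, deg_eq n hn h2]
  have hval : ((List.finRange n)[i]'(by simpa using hi1)).val = i := by simp
  rw [hval]
  simp only [List.getElem_append, List.getElem_replicate, List.length_replicate,
    List.length_append]
  split_ifs <;> omega


def swapHom : K33 →g K33 where
  toFun := Sum.swap
  map_rel' := by
    rintro (a|a) (b|b) h <;> simp [K33, completeBipartiteGraph] at h ⊢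

lemma card_filter_deg (n t : ℕ) (G : SimpleGraph (Fin n))
    (hdeg : Multiset.map (fun v => (G.neighborSet v).ncard) Finset.univ.val
      = ((List.replicate 2 (n-1) ++ List.replicate 3 4 ++ List.replicate (n-5) 3 : List ℕ) : Multiset ℕ)) :
    (Finset.filter (fun v => t = (G.neighborSet v).ncard) Finset.univ).card
      = List.count t (List.replicate 2 (n-1) ++ List.replicate 3 4 ++ List.replicate (n-5) 3) := by
  have hc := Multiset.count_map (fun v => (G.neighborSet v).ncard) Finset.univ.val (b := t)
  rw [hdeg, Multiset.coe_count] at hc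
  exact hc.symm

lemma hub_adj_all (n : ℕ) (hn : 11 ≤ n) (G : SimpleGraph (Fin n)) (h : Fin n)
    (hh : (G.neighborSet h).ncard = n - 1) (w : Fin n) (hw : w ≠ h) : G.Adj h w := by
  have hsub : G.neighborSet h ⊆ ({h}ᶜ : Set (Fin n)) := by
    intro x hx
    simp only [Set.mem_compl_iff, Set.mem_singleton_iff]
    intro e
    exact G.loopless.irrefl h (by rwa [e] at hx)
  have hcompl := Set.ncard_add_ncard_compl ({h} : Set (Fin n))
  rw [Set.ncard_singleton, Nat.card_eq_fintype_card, Fintype.card_fin] at hcompl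
  have heq : G.neighborSet h = ({h}ᶜ : Set (Fin n)) :=
    Set.eq_of_subset_of_ncard_le hsub (by rw [hh]; omega) (Set.toFinite _)
  have : w ∈ G.neighborSet h := by rw [heq]; simp [hw]
  exact this

lemma deg3_nbrs (n : ℕ) (G : SimpleGraph (Fin n)) (v x y z : Fin n)
    (hv : (G.neighborSet v).ncard = 3) (hxy : x ≠ y) (hxz : x ≠ z) (hyz : y ≠ z)
    (ax : G.Adj v x) (ay : G.Adj v y) (az : G.Adj v z) :
    G.neighborSet v = {x, y, z} := by
  have hsub : ({x,y,z} : Set (Fin n)) ⊆ G.neighborSet v := by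
    rintro w (rfl|rfl|rfl) <;> assumption
  exact (Set.eq_of_subset_of_ncard_le hsub
    (by rw [ncard3 hxy hxz hyz, hv]) (Set.toFinite _)).symm

lemma key (n : ℕ) (hn : 11 ≤ n) (G : SimpleGraph (Fin n))
    (hdeg : Multiset.map (fun v => (G.neighborSet v).ncard) Finset.univ.val
      = ((List.replicate 2 (n-1) ++ List.replicate 3 4 ++ List.replicate (n-5) 3 : List ℕ) : Multiset ℕ))
    (f : K33 →g G) (hf : Function.Injective f) (i0 : Fin 3)
    (h3 : (G.neighborSet (f (Sum.inl i0))).ncard = 3) : False := by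
  set d : Fin n → ℕ := fun v => (G.neighborSet v).ncard with hd
  -- every vertex has degree n-1, 4 or 3
  have hmem : ∀ v, d v = n-1 ∨ d v = 4 ∨ d v = 3 := by
    intro v
    have h1 : d v ∈ Multiset.map d Finset.univ.val :=
      Multiset.mem_map_of_mem d (Finset.mem_univ v)
    rw [hdeg] at h1
    simp only [Multiset.mem_coe, List.mem_append, List.mem_replicate] at h1
    omega
  -- exactly two hubs
  have hcard2 : (Finset.filter (fun v => n-1 = d v) Finset.univ).card = 2 := by
    rw [card_filter_deg n (n-1) G hdeg]
    simp only [List.count_append, List.count_replicate, beq_iff_eq]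
    rw [if_pos trivial, if_neg (by omega), if_neg (by omega)]
  obtain ⟨h1, h2, hh12, hfil⟩ := Finset.card_eq_two.1 hcard2
  have hhub_mem : ∀ v, d v = n-1 → v = h1 ∨ v = h2 := by
    intro v hv
    have hm : v ∈ Finset.filter (fun v => n-1 = d v) Finset.univ := by
      simp [hv.symm]
    rw [hfil] at hm
    simpa using hm
  have hd1 : d h1 = n-1 := by
    have hm : h1 ∈ Finset.filter (fun v => n-1 = d v) Finset.univ := by rw [hfil]; simp
    exact (Finset.mem_filter.1 hm).2.symm
  have hd2 : d h2 = n-1 := by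
    have hm : h2 ∈ Finset.filter (fun v => n-1 = d v) Finset.univ := by rw [hfil]; simp
    exact (Finset.mem_filter.1 hm).2.symm
  set a : Fin 3 → Fin n := fun i => f (Sum.inl i) with ha
  set b : Fin 3 → Fin n := fun i => f (Sum.inr i) with hb
  have hadj : ∀ i j, G.Adj (a i) (b j) := by
    intro i j
    exact f.map_rel (by simp [K33, completeBipartiteGraph])
  have hab : ∀ i j, a i ≠ b j := by
    intro i j e
    simpa using hf e
  have haa : ∀ i j : Fin 3, i ≠ j → a i ≠ a j := by
    intro i j hij e
    exact hij (by simpa using hf e)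
  have hbb : ∀ i j : Fin 3, i ≠ j → b i ≠ b j := by
    intro i j hij e
    exact hij (by simpa using hf e)
  -- the neighbors of a i0 are exactly b0 b1 b2
  have hns : G.neighborSet (a i0) = {b 0, b 1, b 2} :=
    deg3_nbrs n G _ _ _ _ h3 (hbb 0 1 (by decide)) (hbb 0 2 (by decide))
      (hbb 1 2 (by decide)) (hadj i0 0) (hadj i0 1) (hadj i0 2)
  -- both hubs are neighbors of a i0
  have hub_nbr : ∀ h, d h = n-1 → ∃ j, h = b j := by
    intro h hh
    have h3' : d (a i0) = 3 := h3
    have hne : a i0 ≠ h := by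
      intro e
      rw [← e] at hh
      omega
    have hm : h ∈ G.neighborSet (a i0) :=
      (hub_adj_all n hn G h hh (a i0) hne).symm
    rw [hns] at hm
    rcases hm with h|h|h
    exacts [⟨0, h⟩, ⟨1, h⟩, ⟨2, h⟩]
  obtain ⟨j1, hj1⟩ := hub_nbr h1 hd1
  obtain ⟨j2, hj2⟩ := hub_nbr h2 hd2
  have hj12 : j1 ≠ j2 := by
    rintro rfl
    exact hh12 (hj1.trans hj2.symm)
  obtain ⟨j3, hj31, hj32⟩ := (by decide : ∀ j1 j2 : Fin 3, ∃ j3, j3 ≠ j1 ∧ j3 ≠ j2) j1 j2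
  set u : Fin n := b j3 with hu
  have hu1 : u ≠ h1 := by rw [hj1]; exact hbb j3 j1 hj31
  have hu2 : u ≠ h2 := by rw [hj2]; exact hbb j3 j2 hj32
  rcases hmem u with hun | hu4 | hu3
  · rcases hhub_mem u hun with e | e
    exacts [hu1 e, hu2 e]
  · -- degree 4: but u has 5 distinct neighbors a0 a1 a2 h1 h2
    have hsub : ({a 0, a 1, a 2, h1, h2} : Set (Fin n)) ⊆ G.neighborSet u := by
      intro w hw
      rcases hw with e|e|e|e|e <;> rw [e]
      exacts [(hadj 0 j3).symm, (hadj 1 j3).symm, (hadj 2 j3).symm,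
        (hub_adj_all n hn G h1 hd1 u hu1).symm, (hub_adj_all n hn G h2 hd2 u hu2).symm]
    have h5 : (5 : ℕ) ≤ (G.neighborSet u).ncard := by
      rw [← ncard5 (haa 0 1 (by decide)) (haa 0 2 (by decide)) (hj1 ▸ hab 0 j1)
        (hj2 ▸ hab 0 j2) (haa 1 2 (by decide)) (hj1 ▸ hab 1 j1) (hj2 ▸ hab 1 j2)
        (hj1 ▸ hab 2 j1) (hj2 ▸ hab 2 j2) hh12]
      exact Set.ncard_le_ncard hsub (Set.toFinite _)
    have hu4' : (G.neighborSet u).ncard = 4 := hu4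
    omega
  · -- degree 3: neighbors of u are a0 a1 a2, but h1 is a neighbor
    have hnsu : G.neighborSet u = {a 0, a 1, a 2} :=
      deg3_nbrs n G _ _ _ _ hu3 (haa 0 1 (by decide)) (haa 0 2 (by decide))
        (haa 1 2 (by decide)) (hadj 0 j3).symm (hadj 1 j3).symm (hadj 2 j3).symm
    have hm : h1 ∈ G.neighborSet u := by
      have : G.Adj h1 u := hub_adj_all n hn G h1 hd1 u hu1
      exact this.symm
    rw [hnsu] at hm
    rcases hm with e|e|e
    · exact hab 0 j1 (e.symm.trans hj1)
    · exact hab 1 j1 (e.symm.trans hj1)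
    · exact hab 2 j1 (e.symm.trans hj1)

lemma deg_mem (n : ℕ) (hn : 11 ≤ n) (G : SimpleGraph (Fin n))
    (hdeg : Multiset.map (fun v => (G.neighborSet v).ncard) Finset.univ.val
      = ((List.replicate 2 (n-1) ++ List.replicate 3 4 ++ List.replicate (n-5) 3 : List ℕ) : Multiset ℕ))
    (v : Fin n) :
    (G.neighborSet v).ncard = n-1 ∨ (G.neighborSet v).ncard = 4 ∨ (G.neighborSet v).ncard = 3 := by
  have h1 : (G.neighborSet v).ncard ∈
      Multiset.map (fun v => (G.neighborSet v).ncard) Finset.univ.val :=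
    Multiset.mem_map_of_mem _ (Finset.mem_univ v)
  rw [hdeg] at h1
  simp only [Multiset.mem_coe, List.mem_append, List.mem_replicate] at h1
  omega

lemma not_pot (n : ℕ) (hn : 11 ≤ n) (G : SimpleGraph (Fin n))
    (hdeg : Multiset.map (fun v => (G.neighborSet v).ncard) Finset.univ.val
      = ((List.replicate 2 (n-1) ++ List.replicate 3 4 ++ List.replicate (n-5) 3 : List ℕ) : Multiset ℕ))
    (f : K33 →g G) (hf : Function.Injective f) : False := by
  by_cases hex : ∃ x : Fin 3 ⊕ Fin 3, (G.neighborSet (f x)).ncard = 3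
  · obtain ⟨x, hx⟩ := hex
    rcases x with i | i
    · exact key n hn G hdeg f hf i hx
    · have hcoe : ⇑(f.comp swapHom) = ⇑f ∘ Sum.swap := rfl
      have hinj : Function.Injective ⇑(f.comp swapHom) := by
        rw [hcoe]; exact hf.comp (Function.LeftInverse.injective Sum.swap_leftInverse)
      exact key n hn G hdeg (f.comp swapHom) hinj i hx
  · push_neg at hex
    have hcard2 : (Finset.filter (fun v => n-1 = (G.neighborSet v).ncard) Finset.univ).card = 2 := by
      rw [card_filter_deg n (n-1) G hdeg]
      simp only [List.count_append, List.count_replicate, beq_iff_eq]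
      rw [if_pos trivial, if_neg (by omega), if_neg (by omega)]
    have hcard4 : (Finset.filter (fun v => 4 = (G.neighborSet v).ncard) Finset.univ).card = 3 := by
      rw [card_filter_deg n 4 G hdeg]
      simp only [List.count_append, List.count_replicate, beq_iff_eq]
      rw [if_neg (by omega), if_pos trivial, if_neg (by omega)]
    set S6 : Finset (Fin n) := Finset.univ.image f with hS6
    have hcard6 : S6.card = 6 := by
      rw [hS6, Finset.card_image_of_injective _ hf, Finset.card_univ]
      simp
    have hsub : S6 ⊆ (Finset.filter (fun v => n-1 = (G.neighborSet v).ncard) Finset.univ) ∪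
        (Finset.filter (fun v => 4 = (G.neighborSet v).ncard) Finset.univ) := by
      intro v hv
      rw [hS6, Finset.mem_image] at hv
      obtain ⟨x, -, rfl⟩ := hv
      rcases deg_mem n hn G hdeg (f x) with h | h | h
      · simp [Finset.mem_union, Finset.mem_filter, h]
      · simp [Finset.mem_union, Finset.mem_filter, h]
      · exact absurd h (hex x)
    have := (Finset.card_le_card hsub).trans (Finset.card_union_le _ _)
    rw [hcard6, hcard2, hcard4] at this
    omega

lemma graphic_aux (n m : ℕ) (hm : m = n) (hn : 11 ≤ n) (h2 : n % 2 = 1) :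
    ∃ G : SimpleGraph (Fin m), Multiset.map (fun v => (G.neighborSet v).ncard) Finset.univ.val
      = ((List.replicate 2 (n-1) ++ List.replicate 3 4 ++ List.replicate (n-5) 3 : List ℕ) : Multiset ℕ) := by
  subst hm
  exact ⟨myG m, degseq m hn h2⟩

lemma not_pot' (n m : ℕ) (hm : m = n) (hn : 11 ≤ n) (G : SimpleGraph (Fin m))
    (hdeg : Multiset.map (fun v => (G.neighborSet v).ncard) Finset.univ.val
      = ((List.replicate 2 (n-1) ++ List.replicate 3 4 ++ List.replicate (n-5) 3 : List ℕ) : Multiset ℕ))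
    (f : K33 →g G) (hf : Function.Injective f) : False := by
  subst hm
  exact not_pot m hn G hdeg f hf

/-- For odd `n ≥ 11`, the sequence `((n−1)², 4³, 3^{n−5})` has `n` terms, is graphic,
has sum `5n − 5`, and is not potentially `K_{3,3}`-graphic. -/
theorem lower_bound_seq_K33_odd (n : ℕ) (hn : 11 ≤ n) (hodd : Odd n)
    (π : List ℕ)
    (hπ : π = List.replicate 2 (n - 1) ++ List.replicate 3 4 ++ List.replicate (n - 5) 3) :
    π.length = n ∧ IsGraphic π ∧ π.sum = 5 * n - 5 ∧ ¬ PotentiallyGraphic K33 π := by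
  have h2 : n % 2 = 1 := Nat.odd_iff.mp hodd
  subst hπ
  have hlen : (List.replicate 2 (n - 1) ++ List.replicate 3 4 ++
      List.replicate (n - 5) 3).length = n := by
    simp [List.length_append, List.length_replicate]; omega
  refine ⟨hlen, ?_, ?_, ?_⟩
  · exact graphic_aux n _ hlen hn h2
  · simp [List.sum_append, List.sum_replicate, smul_eq_mul]; omega
  · intro hpot
    obtain ⟨G, hdeg, f, hf⟩ := hpot
    exact not_pot' n _ hlen hn G hdeg f hf
end

section
/- Let n ≥ 6, t ≥ 0 with n − 6 − t ≥ 0, and let π = (d_1, d_2, 3^4, 2^t, 1^{n−6−t}) be a graphic sequence of n terms with d_1 ≥ d_2 ≥ 3. If π is potentially K_{3,3}-graphic, then d_1 + d_2 ≤ n + t + 2. -/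
open Finset in
/-- Necessity of condition (6) in Theorem 3.1: if the graphic sequence
`(d₁, d₂, 3⁴, 2ᵗ, 1^{n−6−t})` is potentially `K_{3,3}`-graphic, then `d₁ + d₂ ≤ n + t + 2`. -/
theorem K33_necessary_condition_6
    (n t d₁ d₂ : ℕ) (hn : 6 ≤ n) (ht : 6 + t ≤ n) (h12 : d₂ ≤ d₁) (h2 : 3 ≤ d₂)
    (π : List ℕ)
    (hπ : π = [d₁, d₂] ++ List.replicate 4 3 ++ List.replicate t 2 ++
          List.replicate (n - 6 - t) 1)
    (hgraphic : IsGraphic π) (hpot : PotentiallyGraphic K33 π) :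
    d₁ + d₂ ≤ n + t + 2 := by
  classical
  obtain ⟨G, hdeg, f, hf⟩ := hpot
  haveI : DecidableRel G.Adj := Classical.decRel _
  have h1 : 3 ≤ d₁ := le_trans h2 h12
  -- degrees
  have hncard : ∀ v : Fin π.length, (G.neighborSet v).ncard = G.degree v := by
    intro v
    rw [Set.ncard_eq_toFinset_card' (G.neighborSet v)]
    rw [Set.toFinset_card]
    exact G.card_neighborSet_eq_degree v
  have hdegm : Multiset.map (fun v => G.degree v) Finset.univ.val = (π : Multiset ℕ) := by
    rw [← hdeg]
    exact Multiset.map_congr rfl (fun v _ => (hncard v).symm)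
  -- multiset facts about π
  have hfilt : Multiset.filter (fun x => 3 ≤ x) (π : Multiset ℕ)
      = d₁ ::ₘ d₂ ::ₘ Multiset.replicate 4 3 := by
    subst hπ
    simp [h1, h2, List.filter_replicate]
    rfl
  have hc6 : Multiset.countP (fun x => 3 ≤ x) (π : Multiset ℕ) = 6 := by
    subst hπ
    simp [Multiset.countP_cons, h1, h2, List.countP_replicate]
  have hc4 : Multiset.countP (fun x => 4 ≤ x) (π : Multiset ℕ) ≤ 2 := by
    subst hπ
    have key : ∀ (l : List ℕ), List.countP (fun b => decide (4 ≤ b))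
        (d₁ :: d₂ :: 3 :: 3 :: 3 :: 3 :: l) ≤ 2 + List.countP (fun b => decide (4 ≤ b)) l := by
      intro l
      simp [List.countP_cons]
      split <;> split <;> omega
    have hk := key (List.replicate t 2 ++ List.replicate (n - 6 - t) 1)
    simp [List.countP_append, List.countP_replicate] at hk ⊢
    omega
  have hsumπ : Multiset.sum (π : Multiset ℕ) = d₁ + d₂ + 12 + 2 * t + (n - 6 - t) := by
    subst hπ
    simp
    ring
  -- the set S of vertices of degree ≥ 3
  set S : Finset (Fin π.length) := Finset.univ.filter (fun v => 3 ≤ G.degree v) with hS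
  have hcount : ∀ (p : ℕ → Prop) [DecidablePred p],
      (Finset.univ.filter (fun v : Fin π.length => p (G.degree v))).card
        = Multiset.countP p (π : Multiset ℕ) := by
    intro p _
    rw [← hdegm, Multiset.countP_map]
    rfl
  have hS6 : S.card = 6 := by rw [hS, hcount, hc6]
  have hSmap : Multiset.map (fun v => G.degree v) S.val = d₁ ::ₘ d₂ ::ₘ Multiset.replicate 4 3 := by
    rw [hS, Finset.filter_val, ← hfilt, ← hdegm, Multiset.filter_map]
    rfl
  -- each vertex of K33 has three distinct neighbors, and no others
  have trip : ∀ w : Fin 3 ⊕ Fin 3, ∃ a b c : Fin 3 ⊕ Fin 3,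
      a ≠ b ∧ a ≠ c ∧ b ≠ c ∧ K33.Adj w a ∧ K33.Adj w b ∧ K33.Adj w c ∧
      (∀ x, K33.Adj w x → x = a ∨ x = b ∨ x = c) := by
    rintro (i | i)
    · refine ⟨.inr 0, .inr 1, .inr 2, by decide, by decide, by decide,
        by simp [K33], by simp [K33], by simp [K33], ?_⟩
      rintro (j | j) hj
      · simp [K33] at hj
      · have : j = 0 ∨ j = 1 ∨ j = 2 := by omega
        rcases this with h | h | h <;> subst h <;> simp
    · refine ⟨.inl 0, .inl 1, .inl 2, by decide, by decide, by decide,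
        by simp [K33], by simp [K33], by simp [K33], ?_⟩
      rintro (j | j) hj
      · have : j = 0 ∨ j = 1 ∨ j = 2 := by omega
        rcases this with h | h | h <;> subst h <;> simp
      · simp [K33] at hj
  have tripcard : ∀ a b c : Fin π.length, a ≠ b → a ≠ c → b ≠ c →
      ({a, b, c} : Finset (Fin π.length)).card = 3 := by
    intro a b c hab hac hbc
    rw [Finset.card_insert_of_notMem (by simp [hab, hac]),
        Finset.card_insert_of_notMem (by simp [hbc]), Finset.card_singleton]
  have tripsub : ∀ (w : Fin 3 ⊕ Fin 3) (a b c : Fin 3 ⊕ Fin 3),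
      K33.Adj w a → K33.Adj w b → K33.Adj w c →
      ({f a, f b, f c} : Finset (Fin π.length)) ⊆ G.neighborFinset (f w) := by
    intro w a b c ha hb hc x hx
    simp only [Finset.mem_insert, Finset.mem_singleton] at hx
    rw [SimpleGraph.mem_neighborFinset]
    rcases hx with rfl | rfl | rfl
    · exact f.map_adj ha
    · exact f.map_adj hb
    · exact f.map_adj hc
  have deg3 : ∀ w : Fin 3 ⊕ Fin 3, 3 ≤ G.degree (f w) := by
    intro w
    obtain ⟨a, b, c, hab, hac, hbc, ha, hb, hc, -⟩ := trip w
    have hsub := tripsub w a b c ha hb hc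
    have hcard := tripcard (f a) (f b) (f c) (hf.ne hab) (hf.ne hac) (hf.ne hbc)
    calc 3 = ({f a, f b, f c} : Finset (Fin π.length)).card := hcard.symm
      _ ≤ (G.neighborFinset (f w)).card := Finset.card_le_card hsub
      _ = G.degree (f w) := rfl
  have himgS : ∀ w : Fin 3 ⊕ Fin 3, f w ∈ S := by
    intro w
    rw [hS, Finset.mem_filter]
    exact ⟨Finset.mem_univ _, deg3 w⟩
  -- a degree-3 image vertex is adjacent only to images of its K33-neighbors
  have key : ∀ w m : Fin 3 ⊕ Fin 3, G.degree (f m) = 3 → ¬ K33.Adj m w →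
      ¬ G.Adj (f w) (f m) := by
    intro w m hm3 hnadj hadj
    obtain ⟨a, b, c, hab, hac, hbc, ha, hb, hc, hcomp⟩ := trip m
    have hsub := tripsub m a b c ha hb hc
    have hcard := tripcard (f a) (f b) (f c) (hf.ne hab) (hf.ne hac) (hf.ne hbc)
    have heq : ({f a, f b, f c} : Finset (Fin π.length)) = G.neighborFinset (f m) :=
      Finset.eq_of_subset_of_card_le hsub (by rw [hcard]; exact le_of_eq hm3)
    have hmem : f w ∈ G.neighborFinset (f m) := by
      rw [SimpleGraph.mem_neighborFinset]; exact hadj.symm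
    rw [← heq] at hmem
    simp only [Finset.mem_insert, Finset.mem_singleton] at hmem
    rcases hmem with h | h | h
    · exact hnadj (hf h ▸ ha)
    · exact hnadj (hf h ▸ hb)
    · exact hnadj (hf h ▸ hc)
  -- S is exactly the image of f
  have hSimg : S = Finset.univ.image (fun w => f w) := by
    refine (Finset.eq_of_subset_of_card_le ?_ ?_).symm
    · intro x hx
      obtain ⟨w, -, rfl⟩ := Finset.mem_image.mp hx
      exact himgS w
    · rw [hS6, Finset.card_image_of_injective _ hf, Finset.card_univ]
      simp
  -- per-vertex bound on neighbors inside S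
  have main : ∀ v ∈ S, (G.neighborFinset v ∩ S).card ≤ min (G.degree v) 4 := by
    intro v hv
    rw [hSimg] at hv
    obtain ⟨w, -, rfl⟩ := Finset.mem_image.mp hv
    refine le_min (Finset.card_le_card Finset.inter_subset_left) ?_
    by_cases hle : G.degree (f w) ≤ 4
    · exact le_trans (Finset.card_le_card Finset.inter_subset_left) hle
    · -- degree ≥ 5 : find a degree-3 mate in the same part
      have mates : ∃ m₁ m₂ : Fin 3 ⊕ Fin 3, m₁ ≠ m₂ ∧ m₁ ≠ w ∧ m₂ ≠ w ∧
          ¬ K33.Adj m₁ w ∧ ¬ K33.Adj m₂ w := by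
        rcases w with i | i
        · have hall : ∀ i : Fin 3, ∃ j k : Fin 3, j ≠ k ∧ j ≠ i ∧ k ≠ i := by decide
          obtain ⟨j, k, hjk, hji, hki⟩ := hall i
          exact ⟨.inl j, .inl k, by simp [hjk], by simp [hji], by simp [hki],
            by simp [K33], by simp [K33]⟩
        · have hall : ∀ i : Fin 3, ∃ j k : Fin 3, j ≠ k ∧ j ≠ i ∧ k ≠ i := by decide
          obtain ⟨j, k, hjk, hji, hki⟩ := hall i
          exact ⟨.inr j, .inr k, by simp [hjk], by simp [hji], by simp [hki],
            by simp [K33], by simp [K33]⟩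
      obtain ⟨m₁, m₂, hm12, hm1w, hm2w, hna1, hna2⟩ := mates
      have hone : G.degree (f m₁) = 3 ∨ G.degree (f m₂) = 3 := by
        by_contra hcon
        push_neg at hcon
        have h41 : 4 ≤ G.degree (f m₁) := by have := deg3 m₁; have := hcon.1; omega
        have h42 : 4 ≤ G.degree (f m₂) := by have := deg3 m₂; have := hcon.2; omega
        have h4w : 4 ≤ G.degree (f w) := by omega
        have hsub4 : ({f w, f m₁, f m₂} : Finset (Fin π.length)) ⊆
            Finset.univ.filter (fun v => 4 ≤ G.degree v) := by
          intro x hx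
          simp only [Finset.mem_insert, Finset.mem_singleton] at hx
          rw [Finset.mem_filter]
          rcases hx with rfl | rfl | rfl
          · exact ⟨Finset.mem_univ _, h4w⟩
          · exact ⟨Finset.mem_univ _, h41⟩
          · exact ⟨Finset.mem_univ _, h42⟩
        have hc3 := tripcard (f w) (f m₁) (f m₂)
          (hf.ne (Ne.symm hm1w)) (hf.ne (Ne.symm hm2w)) (hf.ne hm12)
        have hle3 := Finset.card_le_card hsub4
        rw [hc3, hcount (fun x => 4 ≤ x)] at hle3
        omega
      obtain ⟨m, hm3, hnam, hmw⟩ : ∃ m, G.degree (f m) = 3 ∧ ¬ K33.Adj m w ∧ m ≠ w := by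
        rcases hone with h | h
        · exact ⟨m₁, h, hna1, hm1w⟩
        · exact ⟨m₂, h, hna2, hm2w⟩
      have hnGadj : ¬ G.Adj (f w) (f m) := key w m hm3 hnam
      have hsub2 : G.neighborFinset (f w) ∩ S ⊆ S \ {f w, f m} := by
        intro x hx
        rw [Finset.mem_inter, SimpleGraph.mem_neighborFinset] at hx
        rw [Finset.mem_sdiff]
        refine ⟨hx.2, fun hmem => ?_⟩
        simp only [Finset.mem_insert, Finset.mem_singleton] at hmem
        rcases hmem with rfl | rfl
        · exact G.irrefl hx.1
        · exact hnGadj hx.1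
      have hpairsub : ({f w, f m} : Finset (Fin π.length)) ⊆ S := by
        intro x hx
        simp only [Finset.mem_insert, Finset.mem_singleton] at hx
        rcases hx with rfl | rfl
        · exact himgS w
        · exact himgS m
      have hpaircard : ({f w, f m} : Finset (Fin π.length)).card = 2 := by
        rw [Finset.card_insert_of_notMem (by simp [hf.ne (Ne.symm hmw)]),
          Finset.card_singleton]
      calc (G.neighborFinset (f w) ∩ S).card ≤ (S \ {f w, f m}).card :=
            Finset.card_le_card hsub2
        _ = S.card - ({f w, f m} : Finset (Fin π.length)).card := Finset.card_sdiff_of_subset hpairsub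
        _ ≤ 4 := by rw [hS6, hpaircard]
  -- summation
  have hdecomp : ∀ v : Fin π.length, G.degree v
      = (G.neighborFinset v ∩ S).card + (G.neighborFinset v \ S).card :=
    fun v => (Finset.card_inter_add_card_sdiff _ _).symm
  have hswap : ∑ v ∈ S, (G.neighborFinset v \ S).card
      = ∑ u ∈ Finset.univ \ S, (G.neighborFinset u ∩ S).card := by
    have e1 : ∀ v : Fin π.length, (G.neighborFinset v \ S).card
        = ∑ u ∈ Finset.univ \ S, (if G.Adj v u then 1 else 0) := by
      intro v
      rw [← Finset.card_filter]
      congr 1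
      ext x
      simp [SimpleGraph.mem_neighborFinset]
      tauto
    have e2 : ∀ u : Fin π.length, (G.neighborFinset u ∩ S).card
        = ∑ v ∈ S, (if G.Adj v u then 1 else 0) := by
      intro u
      rw [← Finset.card_filter]
      congr 1
      ext x
      simp [SimpleGraph.mem_neighborFinset, G.adj_comm]
      tauto
    simp only [e1, e2]
    exact Finset.sum_comm
  have hsum_S : ∑ v ∈ S, G.degree v = d₁ + d₂ + 12 := by
    rw [Finset.sum, hSmap]
    simp [Multiset.sum_replicate]
    ring
  have hsum_min : ∑ v ∈ S, min (G.degree v) 4 ≤ 20 := by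
    have e : ∑ v ∈ S, min (G.degree v) 4
        = ((Multiset.map (fun v => G.degree v) S.val).map (fun d => min d 4)).sum := by
      rw [Multiset.map_map, Finset.sum]
      rfl
    rw [e, hSmap]
    simp [Multiset.sum_replicate]
    have l1 : min d₁ 4 ≤ 4 := min_le_right _ _
    have l2 : min d₂ 4 ≤ 4 := min_le_right _ _
    omega
  have hsum_univ : ∑ v ∈ Finset.univ, G.degree v = d₁ + d₂ + 12 + 2 * t + (n - 6 - t) := by
    rw [Finset.sum, hdegm, hsumπ]
  have hsplit : ∑ u ∈ Finset.univ \ S, G.degree u + ∑ v ∈ S, G.degree v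
      = ∑ v ∈ Finset.univ, G.degree v :=
    Finset.sum_sdiff (Finset.subset_univ S)
  have hout_le : ∑ u ∈ Finset.univ \ S, (G.neighborFinset u ∩ S).card
      ≤ ∑ u ∈ Finset.univ \ S, G.degree u :=
    Finset.sum_le_sum (fun u _ => Finset.card_le_card Finset.inter_subset_left)
  have hin_le : ∑ v ∈ S, (G.neighborFinset v ∩ S).card ≤ ∑ v ∈ S, min (G.degree v) 4 :=
    Finset.sum_le_sum main
  have hfin : ∑ v ∈ S, G.degree v
      = ∑ v ∈ S, (G.neighborFinset v ∩ S).card + ∑ v ∈ S, (G.neighborFinset v \ S).card := by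
    rw [← Finset.sum_add_distrib]
    exact Finset.sum_congr rfl (fun v _ => hdecomp v)
  omega
end

section
/- Let n ≥ 6, t ≥ 0 with n − 7 − t ≥ 0, and let π = (d_1, d_2, 4, 3^4, 2^t, 1^{n−7−t}) be a graphic sequence of n terms with d_1 ≥ d_2 ≥ 4. If π is potentially K_{3,3}-graphic, then d_1 + d_2 ≤ n + t + 3. -/
instance K33.instDecAdj : DecidableRel K33.Adj := fun a b =>
  inferInstanceAs (Decidable ((a.isLeft ∧ b.isRight) ∨ (a.isRight ∧ b.isLeft)))

lemma k33_card_nbr : ∀ a : Fin 3 ⊕ Fin 3, (K33.neighborFinset a).card = 3 := by decide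

set_option synthInstance.maxSize 2000 in
set_option synthInstance.maxHeartbeats 1000000 in
set_option maxHeartbeats 1000000 in
lemma k33_aux : ∀ a b c : Fin 3 ⊕ Fin 3, K33.Adj a b → K33.Adj a c → b ≠ c →
    ∃ d p q : Fin 3 ⊕ Fin 3, K33.Adj a d ∧ d ≠ b ∧ d ≠ c ∧ K33.Adj d p ∧ K33.Adj d q ∧
      p ≠ q ∧ p ≠ a ∧ q ≠ a ∧ p ≠ b ∧ p ≠ c ∧ q ≠ b ∧ q ≠ c ∧ a ≠ b ∧ a ≠ c := by decide

set_option maxHeartbeats 1000000 in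
/-- Necessity of condition (7) in Theorem 3.1: if the graphic sequence
`(d₁, d₂, 4, 3⁴, 2ᵗ, 1^{n−7−t})` is potentially `K_{3,3}`-graphic, then
`d₁ + d₂ ≤ n + t + 3`. -/
theorem K33_necessary_condition_7
    (n t d₁ d₂ : ℕ) (hn : 6 ≤ n) (ht : 7 + t ≤ n) (h12 : d₂ ≤ d₁) (h2 : 4 ≤ d₂)
    (π : List ℕ)
    (hπ : π = [d₁, d₂, 4] ++ List.replicate 4 3 ++ List.replicate t 2 ++
          List.replicate (n - 7 - t) 1)
    (hgraphic : IsGraphic π) (hpot : PotentiallyGraphic K33 π) :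
    d₁ + d₂ ≤ n + t + 3 := by
  clear hgraphic
  by_contra hcon
  push_neg at hcon
  obtain ⟨m, rfl⟩ : ∃ m, n = 7 + t + m := ⟨n - 7 - t, by omega⟩
  rw [show 7 + t + m - 7 - t = m from by omega] at hπ
  subst hπ
  obtain ⟨G, hdeg, f, hf⟩ := hpot
  classical
  haveI : DecidableRel G.Adj := Classical.decRel _
  have hm : 7 + t + m = 7 + t + m := rfl
  -- from ncard to degree
  have hdd : ∀ v, (G.neighborSet v).ncard = G.degree v := fun v => by
    rw [Set.ncard_eq_toFinset_card', ← SimpleGraph.neighborFinset_def]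
    rfl
  unfold IsDegSeqOf at hdeg
  rw [show (fun v => (G.neighborSet v).ncard) = (fun v => G.degree v) from funext hdd] at hdeg
  -- rewrite the degree list as a cons
  set L : List ℕ := 4 :: (List.replicate 4 3 ++ (List.replicate t 2 ++ List.replicate m 1))
    with hL
  have hcoe : (([d₁, d₂, 4] ++ List.replicate 4 3 ++ List.replicate t 2 ++
      List.replicate m 1 : List ℕ) : Multiset ℕ) = d₁ ::ₘ d₂ ::ₘ (L : Multiset ℕ) := by
    have h : ([d₁, d₂, 4] ++ List.replicate 4 3 ++ List.replicate t 2 ++ List.replicate m 1)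
        = d₁ :: d₂ :: L := by simp [hL, List.append_assoc]
    rw [h]
    rfl
  rw [hcoe] at hdeg
  -- extract the two vertices of degree d₁, d₂
  obtain ⟨u, hu_mem, hu, hdeg2⟩ := (Multiset.map_eq_cons _ _ _ _).mpr hdeg
  have hnd0 : (Finset.univ (α := Fin (([d₁, d₂, 4] ++ List.replicate 4 3 ++
      List.replicate t 2 ++ List.replicate m 1).length))).val.Nodup := Finset.univ.nodup
  have hnd1 : (Finset.univ.val.erase u).Nodup := hnd0.erase u
  obtain ⟨v, hv_mem, hv, hS⟩ := (Multiset.map_eq_cons _ _ _ _).mpr hdeg2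
  have hvu : v ≠ u := (hnd0.mem_erase_iff.mp hv_mem).1
  set S : Multiset (Fin _) := (Finset.univ.val.erase u).erase v with hSdef
  have hnd2 : S.Nodup := hnd1.erase v
  have hSmem : ∀ w, w ≠ u → w ≠ v → w ∈ S := by
    intro w hwu hwv
    rw [hSdef, hnd1.mem_erase_iff, hnd0.mem_erase_iff]
    exact ⟨hwv, hwu, Finset.mem_univ_val w⟩
  -- degrees in S are ≤ 4
  have hle4 : ∀ w ∈ S, G.degree w ≤ 4 := by
    intro w hw
    have hmem : G.degree w ∈ (L : Multiset ℕ) := by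
      rw [← hS]; exact Multiset.mem_map_of_mem _ hw
    rw [Multiset.mem_coe, hL] at hmem
    simp only [List.mem_cons, List.mem_append, List.mem_replicate] at hmem
    omega
  -- sum of min(deg,2) over S
  have hmin : (S.map (fun w => min (G.degree w) 2)).sum = 10 + 2 * t + m := by
    have h1 : S.map (fun w => min (G.degree w) 2)
        = (S.map (fun v => G.degree v)).map (fun x => min x 2) := by
      rw [Multiset.map_map]; rfl
    rw [h1, hS, hL]
    rw [Multiset.map_coe, Multiset.sum_coe]
    simp [List.map_replicate, List.sum_append, List.sum_replicate, smul_eq_mul]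
    ring
  -- parity from handshake
  have hpar : ∃ k, d₁ + d₂ + (16 + 2 * t + m) = k + k := by
    have hsum : (Multiset.map (fun v => G.degree v) Finset.univ.val).sum = ∑ w, G.degree w := rfl
    rw [hdeg] at hsum
    have hLsum : (L : Multiset ℕ).sum = 16 + 2 * t + m := by
      rw [hL, Multiset.sum_coe]
      simp [List.sum_append, List.sum_replicate, smul_eq_mul]
      ring
    refine ⟨G.edgeFinset.card, ?_⟩
    rw [Multiset.sum_cons, Multiset.sum_cons, hLsum] at hsum
    have h2e := SimpleGraph.sum_degrees_eq_twice_card_edges G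
    omega
  obtain ⟨k, hk⟩ := hpar
  -- the counting argument
  set Sf : Finset (Fin _) := ⟨S, hnd2⟩ with hSf
  have hSfmem : ∀ w, w ∈ Sf ↔ w ∈ S := fun w => Iff.rfl
  have hSfsum : ∀ g : Fin _ → ℕ, ∑ w ∈ Sf, g w = (S.map g).sum := fun g => rfl
  have hfilt : ∀ x, (Sf.filter (fun w => G.Adj x w)).card
      = ∑ w ∈ Sf, (if G.Adj x w then 1 else 0) := fun x => Finset.card_filter _ _
  have key : ∀ x y, (∀ w, w ≠ x → w ≠ y → w ∈ S) →
      G.degree x ≤ 1 + (Sf.filter (fun w => G.Adj x w)).card := by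
    intro x y hmem'
    have hsub : G.neighborFinset x ⊆ insert y (Sf.filter (fun w => G.Adj x w)) := by
      intro w hw
      rw [SimpleGraph.mem_neighborFinset] at hw
      by_cases hwy : w = y
      · exact hwy ▸ Finset.mem_insert_self _ _
      · exact Finset.mem_insert_of_mem
          (Finset.mem_filter.mpr ⟨(hSfmem w).mpr (hmem' w hw.ne' hwy), hw⟩)
    calc G.degree x = (G.neighborFinset x).card := rfl
      _ ≤ (insert y (Sf.filter (fun w => G.Adj x w))).card := Finset.card_le_card hsub
      _ ≤ (Sf.filter (fun w => G.Adj x w)).card + 1 := Finset.card_insert_le _ _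
      _ = 1 + _ := by omega
  have hku := key u v (fun w h1 h2 => hSmem w h1 h2)
  have hkv := key v u (fun w h1 h2 => hSmem w h2 h1)
  -- pointwise bound
  have hpw : ∀ w ∈ Sf, (if G.Adj u w then 1 else 0) + (if G.Adj v w then 1 else 0)
      ≤ min (G.degree w) 2 := by
    intro w _
    have hdu : G.Adj u w → 1 ≤ G.degree w := fun h =>
      Finset.card_pos.mpr ⟨u, (SimpleGraph.mem_neighborFinset _ _ _).mpr h.symm⟩
    have hduv : G.Adj u w → G.Adj v w → 2 ≤ G.degree w := by
      intro h1 h2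
      have hsub2 : ({u, v} : Finset _) ⊆ G.neighborFinset w := by
        intro x hx
        rw [Finset.mem_insert, Finset.mem_singleton] at hx
        rcases hx with rfl | rfl
        · exact (SimpleGraph.mem_neighborFinset _ _ _).mpr h1.symm
        · exact (SimpleGraph.mem_neighborFinset _ _ _).mpr h2.symm
      have := Finset.card_le_card hsub2
      rwa [Finset.card_pair (Ne.symm hvu)] at this
    have hdv : G.Adj v w → 1 ≤ G.degree w := fun h =>
      Finset.card_pos.mpr ⟨v, (SimpleGraph.mem_neighborFinset _ _ _).mpr h.symm⟩
    by_cases h1 : G.Adj u w <;> by_cases h2' : G.Adj v w <;>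
      simp only [h1, h2', if_true, if_false, le_min_iff]
    · exact ⟨hduv h1 h2', le_refl 2⟩
    · exact ⟨hdu h1, by omega⟩
    · exact ⟨hdv h2', by omega⟩
    · exact ⟨Nat.zero_le _, by omega⟩
  have hB : ∑ w ∈ Sf, ((if G.Adj u w then 1 else 0) + (if G.Adj v w then 1 else 0))
      ≤ ∑ w ∈ Sf, min (G.degree w) 2 := Finset.sum_le_sum hpw
  have hC : ∑ w ∈ Sf, min (G.degree w) 2 = 10 + 2 * t + m := by
    rw [hSfsum]; exact hmin
  have hsplit : ∑ w ∈ Sf, ((if G.Adj u w then 1 else 0) + (if G.Adj v w then 1 else 0))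
      = ∑ w ∈ Sf, (if G.Adj u w then 1 else 0) + ∑ w ∈ Sf, (if G.Adj v w then 1 else 0) :=
    Finset.sum_add_distrib
  rw [hu] at hku
  rw [hv] at hkv
  rw [hfilt u] at hku
  rw [hfilt v] at hkv
  -- forcing equality
  have hEq : ∑ w ∈ Sf, ((if G.Adj u w then 1 else 0) + (if G.Adj v w then 1 else 0))
      = ∑ w ∈ Sf, min (G.degree w) 2 := by omega
  have hforce := (Finset.sum_eq_sum_iff_of_le hpw).mp hEq
  have hadj : ∀ w, w ∈ S → 2 ≤ G.degree w → G.Adj u w ∧ G.Adj v w := by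
    intro w hw h2w
    have hfw := hforce w ((hSfmem w).mpr hw)
    rw [min_eq_right h2w] at hfw
    constructor
    · by_contra h
      simp only [h, if_false] at hfw
      by_cases h2' : G.Adj v w <;> simp [h2'] at hfw
    · by_contra h
      simp only [h, if_false] at hfw
      by_cases h1 : G.Adj u w <;> simp [h1] at hfw
  -- degree bounds for u and v
  have hcard : Fintype.card (Fin (([d₁, d₂, 4] ++ List.replicate 4 3 ++ List.replicate t 2 ++
      List.replicate m 1).length)) = 7 + t + m := by
    simp [List.length_append, List.length_replicate]
    omega
  have hd1lt := G.degree_lt_card_verts u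
  rw [hu, hcard] at hd1lt
  have hd : d₁ + d₂ = 12 + 2 * t + m := by omega
  have hd2ge : 6 ≤ d₂ := by omega
  have hd1ge : 6 ≤ d₁ := by omega
  -- every image vertex has degree ≥ 3
  have himg3 : ∀ a, 3 ≤ G.degree (f a) := by
    intro a
    have hsub : ∀ b ∈ K33.neighborFinset a, f b ∈ G.neighborFinset (f a) := by
      intro b hb
      rw [SimpleGraph.mem_neighborFinset] at hb ⊢
      exact f.map_adj hb
    have hc := Finset.card_le_card_of_injOn f hsub hf.injOn
    rw [k33_card_nbr a] at hc
    exact hc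
  -- exactly 3 vertices have degree ≥ 4
  have hT : (Finset.univ.filter (fun w => 4 ≤ G.degree w)).card = 3 := by
    have h1 : (Finset.univ.filter (fun w => 4 ≤ G.degree w)).card
        = Multiset.countP (fun x => 4 ≤ x)
          (Multiset.map (fun v => G.degree v) Finset.univ.val) := by
      rw [Multiset.countP_map]
      rfl
    have hLc : Multiset.countP (fun x => 4 ≤ x) (L : Multiset ℕ) = 1 := by
      have hrepr : (L : Multiset ℕ) = 4 ::ₘ (Multiset.replicate 4 3 +
          (Multiset.replicate t 2 + Multiset.replicate m 1)) := by rw [hL]; rfl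
      rw [hrepr, Multiset.countP_cons, Multiset.countP_add, Multiset.countP_add]
      rw [Multiset.countP_eq_zero.mpr, Multiset.countP_eq_zero.mpr,
        Multiset.countP_eq_zero.mpr]
      · norm_num
      all_goals intro a ha; rw [Multiset.eq_of_mem_replicate ha]; omega
    rw [h1, hdeg, Multiset.countP_cons, Multiset.countP_cons, hLc]
    have e1 : (if 4 ≤ d₁ then 1 else 0) = 1 := by simp; omega
    have e2 : (if 4 ≤ d₂ then 1 else 0) = 1 := by simp; omega
    rw [e1, e2]
  -- some image vertex has degree exactly 3
  have hex3 : ∃ a, G.degree (f a) = 3 := by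
    by_contra hno
    push_neg at hno
    have h4 : ∀ a, 4 ≤ G.degree (f a) := fun a => by
      have := himg3 a; have := hno a; omega
    have hc6 : (Finset.univ : Finset (Fin 3 ⊕ Fin 3)).card
        ≤ (Finset.univ.filter (fun w => 4 ≤ G.degree w)).card := by
      apply Finset.card_le_card_of_injOn f
      · intro a _
        exact Finset.mem_filter.mpr ⟨Finset.mem_univ _, h4 a⟩
      · exact hf.injOn
    rw [hT] at hc6
    simp at hc6
  obtain ⟨a0, ha0⟩ := hex3
  -- the vertex x = f a0 has degree 3, so u and v are among its neighbors
  have hxu : f a0 ≠ u := fun h => by rw [h, hu] at ha0; omega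
  have hxv : f a0 ≠ v := fun h => by rw [h, hv] at ha0; omega
  have hxS : f a0 ∈ S := hSmem _ hxu hxv
  obtain ⟨hux, hvx⟩ := hadj _ hxS (by omega)
  -- the neighbors of x are exactly the images of the K33-neighbors of a0
  have himg_eq : (K33.neighborFinset a0).image f = G.neighborFinset (f a0) := by
    apply Finset.eq_of_subset_of_card_le
    · intro w hw
      rw [Finset.mem_image] at hw
      obtain ⟨b, hb, rfl⟩ := hw
      rw [SimpleGraph.mem_neighborFinset] at hb ⊢
      exact f.map_adj hb
    · have : (G.neighborFinset (f a0)).card = 3 := ha0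
      rw [this, Finset.card_image_of_injective _ hf, k33_card_nbr a0]
  have hub : ∃ b, K33.Adj a0 b ∧ f b = u := by
    have hmem : u ∈ G.neighborFinset (f a0) :=
      (SimpleGraph.mem_neighborFinset _ _ _).mpr hux.symm
    rw [← himg_eq, Finset.mem_image] at hmem
    obtain ⟨b, hb, hfb⟩ := hmem
    exact ⟨b, (SimpleGraph.mem_neighborFinset _ _ _).mp hb, hfb⟩
  have hvc : ∃ c, K33.Adj a0 c ∧ f c = v := by
    have hmem : v ∈ G.neighborFinset (f a0) :=
      (SimpleGraph.mem_neighborFinset _ _ _).mpr hvx.symm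
    rw [← himg_eq, Finset.mem_image] at hmem
    obtain ⟨c, hc, hfc⟩ := hmem
    exact ⟨c, (SimpleGraph.mem_neighborFinset _ _ _).mp hc, hfc⟩
  obtain ⟨b, hab, hfb⟩ := hub
  obtain ⟨c, hac, hfc⟩ := hvc
  have hbc : b ≠ c := fun h => hvu (by rw [← hfc, ← h, hfb])
  obtain ⟨d, p, q, had, hdb, hdc, hdp, hdq, hpq, hpa, hqa, hpb, hpc, hqb, hqc, habne, hacne⟩ :=
    k33_aux a0 b c hab hac hbc
  -- y = f d is adjacent to u, v, f a0, f p, f q : five distinct vertices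
  have hyu : f d ≠ u := fun h => hdb (hf (h.trans hfb.symm))
  have hyv : f d ≠ v := fun h => hdc (hf (h.trans hfc.symm))
  have hyS : f d ∈ S := hSmem _ hyu hyv
  have hy3 := himg3 d
  have hy4 := hle4 _ hyS
  obtain ⟨huy, hvy⟩ := hadj _ hyS (by omega)
  have hsub5 : ({u, v, f a0, f p, f q} : Finset _) ⊆ G.neighborFinset (f d) := by
    intro w hw
    simp only [Finset.mem_insert, Finset.mem_singleton] at hw
    rw [SimpleGraph.mem_neighborFinset]
    rcases hw with rfl | rfl | rfl | rfl | rfl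
    · exact huy.symm
    · exact hvy.symm
    · exact (f.map_adj had).symm
    · exact f.map_adj hdp
    · exact f.map_adj hdq
  have h5 : ({u, v, f a0, f p, f q} : Finset _).card = 5 := by
    have n1 : u ∉ ({v, f a0, f p, f q} : Finset _) := by
      simp only [Finset.mem_insert, Finset.mem_singleton]
      push_neg
      exact ⟨hvu.symm, fun h => hxu h.symm, fun h => hpb (hf (hfb.symm ▸ h.symm)),
        fun h => hqb (hf (hfb.symm ▸ h.symm))⟩
    have n2 : v ∉ ({f a0, f p, f q} : Finset _) := by
      simp only [Finset.mem_insert, Finset.mem_singleton]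
      push_neg
      exact ⟨fun h => hxv h.symm, fun h => hpc (hf (hfc.symm ▸ h.symm)),
        fun h => hqc (hf (hfc.symm ▸ h.symm))⟩
    have n3 : f a0 ∉ ({f p, f q} : Finset _) := by
      simp only [Finset.mem_insert, Finset.mem_singleton]
      push_neg
      exact ⟨fun h => hpa (hf h.symm), fun h => hqa (hf h.symm)⟩
    have n4 : f p ∉ ({f q} : Finset _) := by
      simp only [Finset.mem_singleton]
      exact fun h => hpq (hf h)
    rw [Finset.card_insert_of_notMem n1, Finset.card_insert_of_notMem n2,
      Finset.card_insert_of_notMem n3, Finset.card_insert_of_notMem n4,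
      Finset.card_singleton]
  have h5le : 5 ≤ G.degree (f d) := by
    rw [← h5]
    exact Finset.card_le_card hsub5
  omega
end

section
/- Let t ∈ {5, 6}, and let n, i, k be integers with 1 ≤ i ≤ ⌊(n−k)/2⌋ and t ≤ k ≤ n − 2i. Then the sequence π = (n−i, k+i, 4^t, 2^{k−t}, 1^{n−2−k}) of n terms is not potentially K_{3,3}-graphic. -/
open Finset

private lemma countP_repl (p : ℕ → Prop) [DecidablePred p] (m a : ℕ) :
    Multiset.countP p (Multiset.replicate m a) = if p a then m else 0 := by
  induction m with
  | zero => simp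
  | succ m ih =>
    rw [Multiset.replicate_succ, Multiset.countP_cons, ih]
    split <;> simp [*]

private lemma filter_repl (p : ℕ → Prop) [DecidablePred p] (m a : ℕ) :
    Multiset.filter p (Multiset.replicate m a) =
      if p a then Multiset.replicate m a else 0 := by
  by_cases h : p a
  · rw [if_pos h]
    exact Multiset.filter_eq_self.2 fun b hb => (Multiset.eq_of_mem_replicate hb) ▸ h
  · rw [if_neg h]
    exact Multiset.filter_eq_nil.2 fun b hb => (Multiset.eq_of_mem_replicate hb) ▸ h

private lemma double_count {V : Type} [Fintype V] [DecidableEq V] (G : SimpleGraph V)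
    [DecidableRel G.Adj] (P Q : Finset V) :
    ∑ a ∈ P, (G.neighborFinset a ∩ Q).card = ∑ b ∈ Q, (G.neighborFinset b ∩ P).card := by
  have key : ∀ (P Q : Finset V) (a : V),
      (G.neighborFinset a ∩ Q).card = ∑ b ∈ Q, if G.Adj a b then 1 else 0 := by
    intro P Q a
    have h2 : G.neighborFinset a ∩ Q = Q.filter (fun b => G.Adj a b) := by
      ext b; simp [SimpleGraph.mem_neighborFinset, and_comm]
    rw [h2, Finset.card_filter]
  simp only [key P Q, key Q P]
  rw [Finset.sum_comm]
  apply Finset.sum_congr rfl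
  intro b _
  apply Finset.sum_congr rfl
  intro a _
  simp [G.adj_comm]

set_option maxHeartbeats 2000000 in
/-- Necessity of condition (8) in Theorem 3.1: for `t ∈ {5,6}`, the sequence
`(n−i, k+i, 4ᵗ, 2^{k−t}, 1^{n−2−k})` is not potentially `K_{3,3}`-graphic. -/
theorem K33_necessary_condition_8
    (n i k t : ℕ) (ht : t = 5 ∨ t = 6) (hi1 : 1 ≤ i) (hi2 : i ≤ (n - k) / 2)
    (hk1 : t ≤ k) (hk2 : k ≤ n - 2 * i) :
    ¬ PotentiallyGraphic K33
      ([n - i, k + i] ++ List.replicate t 4 ++ List.replicate (k - t) 2 ++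
        List.replicate (n - 2 - k) 1) := by
  rintro ⟨G, hdeg, f, hf⟩
  classical
  -- arithmetic facts
  have hni5 : 5 ≤ n - i := by omega
  have hki5 : 5 ≤ k + i := by omega
  -- the degree multiset
  have hmap : Multiset.map (fun v => G.degree v) Finset.univ.val
      = (n-i) ::ₘ (k+i) ::ₘ (Multiset.replicate t 4 + Multiset.replicate (k-t) 2
          + Multiset.replicate (n-2-k) 1) := by
    have h1 : ∀ v, (G.neighborSet v).ncard = G.degree v := by
      intro v
      rw [Set.ncard_eq_toFinset_card']
      rfl
    unfold IsDegSeqOf at hdeg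
    rw [Multiset.map_congr rfl (fun v _ => (h1 v).symm), hdeg]
    simp only [List.append_assoc, List.cons_append, List.nil_append]
    rw [← Multiset.cons_coe, ← Multiset.cons_coe]
    congr 2
    rw [← Multiset.coe_add, ← Multiset.coe_add]
    simp [Multiset.coe_replicate, add_assoc]
  have hcount : ∀ (p : ℕ → Prop) (inst : DecidablePred p),
      (Finset.univ.filter (fun v => p (G.degree v))).card
        = Multiset.countP p ((n-i) ::ₘ (k+i) ::ₘ (Multiset.replicate t 4
            + Multiset.replicate (k-t) 2 + Multiset.replicate (n-2-k) 1)) := by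
    intro p _
    rw [Finset.card_def, Finset.filter_val, ← Multiset.countP_eq_card_filter, ← hmap,
      Multiset.countP_map, ← Multiset.countP_eq_card_filter]
  have hW2 : (Finset.univ.filter (fun v => 5 ≤ G.degree v)).card = 2 := by
    have h := hcount (fun x => 5 ≤ x) inferInstance
    rw [Multiset.countP_cons, Multiset.countP_cons, Multiset.countP_add,
      Multiset.countP_add, countP_repl, countP_repl, countP_repl] at h
    rw [h]; split_ifs <;> omega
  have hfours : (Finset.univ.filter (fun v => G.degree v = 4)).card = t := by
    have h := hcount (fun x => x = 4) inferInstance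
    rw [Multiset.countP_cons, Multiset.countP_cons, Multiset.countP_add,
      Multiset.countP_add, countP_repl, countP_repl, countP_repl] at h
    rw [h]; split_ifs <;> omega
  have hsum_univ : ∑ v, G.degree v = (n-i) + ((k+i) + (t*4 + ((k-t)*2 + (n-2-k)))) := by
    have h0 : ∑ v, G.degree v = (Multiset.map (fun v => G.degree v) Finset.univ.val).sum := rfl
    rw [h0, hmap]
    simp only [Multiset.sum_cons, Multiset.sum_add, Multiset.sum_replicate, smul_eq_mul]
    omega
  have hmem : ∀ v, G.degree v = n-i ∨ G.degree v = k+i ∨ G.degree v = 4 ∨ G.degree v = 2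
      ∨ G.degree v = 1 := by
    intro v
    have hv : G.degree v ∈ Multiset.map (fun v => G.degree v) Finset.univ.val :=
      Multiset.mem_map_of_mem _ (Finset.mem_val.mpr (Finset.mem_univ v))
    rw [hmap] at hv
    simp only [Multiset.mem_cons, Multiset.mem_add, Multiset.mem_replicate] at hv
    omega
  obtain ⟨v1, v2, hv12, hWpair⟩ := Finset.card_eq_two.1 hW2
  have hv1W : v1 ∈ Finset.univ.filter (fun v => 5 ≤ G.degree v) := by rw [hWpair]; simp
  have hv2W : v2 ∈ Finset.univ.filter (fun v => 5 ≤ G.degree v) := by rw [hWpair]; simp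
  have hd1 : 5 ≤ G.degree v1 := (Finset.mem_filter.1 hv1W).2
  have hd2 : 5 ≤ G.degree v2 := (Finset.mem_filter.1 hv2W).2
  have hWsum : ∑ w ∈ Finset.univ.filter (fun v => 5 ≤ G.degree v), G.degree w
      = (n-i) + (k+i) := by
    rw [hWpair, Finset.sum_pair hv12]
    have h1 := hmem v1
    have h2 := hmem v2
    by_cases hcase : n - i = k + i
    · omega
    · have hcnt1 : (Finset.univ.filter (fun v => G.degree v = n - i)).card = 1 := by
        have h := hcount (fun x => x = n - i) inferInstance
        rw [Multiset.countP_cons, Multiset.countP_cons, Multiset.countP_add,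
          Multiset.countP_add, countP_repl, countP_repl, countP_repl] at h
        rw [h]; split_ifs <;> omega
      have hcnt2 : (Finset.univ.filter (fun v => G.degree v = k + i)).card = 1 := by
        have h := hcount (fun x => x = k + i) inferInstance
        rw [Multiset.countP_cons, Multiset.countP_cons, Multiset.countP_add,
          Multiset.countP_add, countP_repl, countP_repl, countP_repl] at h
        rw [h]; split_ifs <;> omega
      have hkey : ∀ m : ℕ, G.degree v1 = m → G.degree v2 = m →
          (Finset.univ.filter (fun v => G.degree v = m)).card ≠ 1 := by
        intro m e1 e2 hc
        have hsub : ({v1, v2} : Finset _) ⊆ Finset.univ.filter (fun v => G.degree v = m) := by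
          intro x hx
          simp only [Finset.mem_insert, Finset.mem_singleton] at hx
          rcases hx with rfl | rfl <;> simp [e1, e2]
        have := Finset.card_le_card hsub
        rw [Finset.card_pair hv12, hc] at this
        omega
      rcases h1 with e1 | e1 | e1 | e1 | e1 <;> rcases h2 with e2 | e2 | e2 | e2 | e2 <;>
        first
          | omega
          | (exact absurd hcnt1 (hkey _ e1 e2))
          | (exact absurd hcnt2 (hkey _ e1 e2))
  -- name the two vertex classes
  set Wf : Finset _ := Finset.univ.filter (fun v => 5 ≤ G.degree v) with hWf
  set Rf : Finset _ := Finset.univ.filter (fun v => ¬ 5 ≤ G.degree v) with hRf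
  have hmemRf : ∀ v, v ∈ Rf ↔ v ∉ Wf := by
    intro v; rw [hWf, hRf]; simp
  -- degree splitting
  have hsplitd : ∀ u, G.degree u
      = (G.neighborFinset u ∩ Wf).card + (G.neighborFinset u ∩ Rf).card := by
    intro u
    have e1 : G.neighborFinset u ∩ Wf = (G.neighborFinset u).filter (fun v => 5 ≤ G.degree v) := by
      rw [hWf, Finset.inter_filter, Finset.inter_univ]
    have e2 : G.neighborFinset u ∩ Rf
        = (G.neighborFinset u).filter (fun v => ¬ 5 ≤ G.degree v) := by
      rw [hRf, Finset.inter_filter, Finset.inter_univ]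
    rw [e1, e2, Finset.card_filter_add_card_filter_not]
    exact (SimpleGraph.card_neighborFinset_eq_degree _ _).symm
  have hsum_split : ∑ w ∈ Wf, G.degree w + ∑ u ∈ Rf, G.degree u = ∑ v, G.degree v :=
    Finset.sum_filter_add_sum_filter_not _ _ _
  have h1 : ∑ u ∈ Rf, G.degree u
      = ∑ u ∈ Rf, (G.neighborFinset u ∩ Wf).card
        + ∑ u ∈ Rf, (G.neighborFinset u ∩ Rf).card := by
    rw [← Finset.sum_add_distrib]
    exact Finset.sum_congr rfl fun u _ => hsplitd u
  have h2 : ∑ w ∈ Wf, G.degree w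
      = ∑ w ∈ Wf, (G.neighborFinset w ∩ Wf).card
        + ∑ w ∈ Wf, (G.neighborFinset w ∩ Rf).card := by
    rw [← Finset.sum_add_distrib]
    exact Finset.sum_congr rfl fun u _ => hsplitd u
  have hdc : ∑ u ∈ Rf, (G.neighborFinset u ∩ Wf).card
      = ∑ w ∈ Wf, (G.neighborFinset w ∩ Rf).card := double_count G Rf Wf
  -- K33 structure
  have hadj : ∀ (a b : Fin 3), G.Adj (f (Sum.inl a)) (f (Sum.inr b)) := by
    intro a b
    exact f.map_adj (Or.inl ⟨rfl, rfl⟩)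
  have hne_lr : ∀ (a b : Fin 3), f (Sum.inl a) ≠ f (Sum.inr b) := by
    intro a b h
    simpa using hf h
  have hinl_inj : ∀ (a a' : Fin 3), a ≠ a' → f (Sum.inl a) ≠ f (Sum.inl a') := by
    intro a a' hne h
    exact hne (by simpa using hf h)
  have hinr_inj : ∀ (b b' : Fin 3), b ≠ b' → f (Sum.inr b) ≠ f (Sum.inr b') := by
    intro b b' hne h
    exact hne (by simpa using hf h)
  have hcard3r : ∀ u : _, ({f (Sum.inr 0), f (Sum.inr 1), f (Sum.inr 2)} : Finset _) ⊆ u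
      → 3 ≤ u.card := by
    intro u hsub
    refine le_trans (le_of_eq ?_) (Finset.card_le_card hsub)
    rw [Finset.card_insert_of_notMem (by
        simp only [Finset.mem_insert, Finset.mem_singleton]
        push_neg
        exact ⟨hinr_inj 0 1 (by decide), hinr_inj 0 2 (by decide)⟩),
      Finset.card_insert_of_notMem (by
        simp only [Finset.mem_singleton]
        exact hinr_inj 1 2 (by decide)),
      Finset.card_singleton]
  have hcard3l : ∀ u : _, ({f (Sum.inl 0), f (Sum.inl 1), f (Sum.inl 2)} : Finset _) ⊆ u
      → 3 ≤ u.card := by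
    intro u hsub
    refine le_trans (le_of_eq ?_) (Finset.card_le_card hsub)
    rw [Finset.card_insert_of_notMem (by
        simp only [Finset.mem_insert, Finset.mem_singleton]
        push_neg
        exact ⟨hinl_inj 0 1 (by decide), hinl_inj 0 2 (by decide)⟩),
      Finset.card_insert_of_notMem (by
        simp only [Finset.mem_singleton]
        exact hinl_inj 1 2 (by decide)),
      Finset.card_singleton]
  have hS3 : ∀ z : Fin 3 ⊕ Fin 3, 3 ≤ G.degree (f z) := by
    intro z
    rw [← SimpleGraph.card_neighborFinset_eq_degree]
    cases z with
    | inl a =>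
      refine hcard3r _ ?_
      intro x hx
      simp only [Finset.mem_insert, Finset.mem_singleton] at hx
      rcases hx with rfl | rfl | rfl <;>
        exact (SimpleGraph.mem_neighborFinset _ _ _).2 (hadj a _)
    | inr b =>
      refine hcard3l _ ?_
      intro x hx
      simp only [Finset.mem_insert, Finset.mem_singleton] at hx
      rcases hx with rfl | rfl | rfl <;>
        exact (SimpleGraph.mem_neighborFinset _ _ _).2 ((hadj _ b).symm)
  have hdeg4 : ∀ z : Fin 3 ⊕ Fin 3, f z ∉ Wf → G.degree (f z) = 4 := by
    intro z hz
    have h3 := hS3 z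
    have h5 : ¬ 5 ≤ G.degree (f z) := by
      intro h5
      exact hz (by rw [hWf]; exact Finset.mem_filter.2 ⟨Finset.mem_univ _, h5⟩)
    have := hmem (f z)
    omega
  -- the set of degree-4 vertices
  set F4 : Finset _ := Finset.univ.filter (fun v => G.degree v = 4) with hF4
  have hF4R : F4 ⊆ Rf := by
    intro v hv
    rw [hF4, Finset.mem_filter] at hv
    rw [hRf, Finset.mem_filter]
    exact ⟨Finset.mem_univ _, by omega⟩
  have hF42 : ∀ u ∈ F4, 2 ≤ (G.neighborFinset u ∩ Rf).card := by
    intro u hu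
    rw [hF4, Finset.mem_filter] at hu
    have hsd := hsplitd u
    have hW : (G.neighborFinset u ∩ Wf).card ≤ 2 := by
      calc (G.neighborFinset u ∩ Wf).card ≤ Wf.card := Finset.card_le_card Finset.inter_subset_right
        _ = 2 := hW2
    omega
  -- case split on position of the two big vertices
  by_cases hcase : (∃ a : Fin 3, f (Sum.inl a) ∈ Wf) ∧ (∃ b : Fin 3, f (Sum.inr b) ∈ Wf)
  · -- both parts meet W : the two big vertices are in opposite parts of the K33
    obtain ⟨⟨a0, ha0⟩, ⟨b0, hb0⟩⟩ := hcase
    have hneab : f (Sum.inl a0) ≠ f (Sum.inr b0) := hne_lr a0 b0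
    have hWfeq : Wf = ({f (Sum.inl a0), f (Sum.inr b0)} : Finset _) := by
      refine (Finset.eq_of_subset_of_card_le ?_ ?_).symm
      · intro x hx
        simp only [Finset.mem_insert, Finset.mem_singleton] at hx
        rcases hx with rfl | rfl
        · exact ha0
        · exact hb0
      · rw [hW2, Finset.card_pair hneab]
    have hbeta2 : ∑ w ∈ Wf, (G.neighborFinset w ∩ Wf).card = 2 := by
      rw [hWfeq, Finset.sum_pair hneab]
      have e1 : G.neighborFinset (f (Sum.inl a0)) ∩ {f (Sum.inl a0), f (Sum.inr b0)}
          = {f (Sum.inr b0)} := by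
        ext c
        simp only [Finset.mem_inter, SimpleGraph.mem_neighborFinset, Finset.mem_insert,
          Finset.mem_singleton]
        constructor
        · rintro ⟨hadjc, rfl | rfl⟩
          · exact absurd hadjc (G.irrefl)
          · rfl
        · rintro rfl
          exact ⟨hadj a0 b0, Or.inr rfl⟩
      have e2 : G.neighborFinset (f (Sum.inr b0)) ∩ {f (Sum.inl a0), f (Sum.inr b0)}
          = {f (Sum.inl a0)} := by
        ext c
        simp only [Finset.mem_inter, SimpleGraph.mem_neighborFinset, Finset.mem_insert,
          Finset.mem_singleton]
        constructor
        · rintro ⟨hadjc, rfl | rfl⟩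
          · rfl
          · exact absurd hadjc (G.irrefl)
        · rintro rfl
          exact ⟨(hadj a0 b0).symm, Or.inl rfl⟩
      rw [e1, e2]
      simp
    -- the image of the K33
    set Sset : Finset _ := Finset.univ.image (fun z => f z) with hSset
    have hSmem : ∀ z : Fin 3 ⊕ Fin 3, f z ∈ Sset := by
      intro z
      rw [hSset]
      exact Finset.mem_image_of_mem _ (Finset.mem_univ _)
    have hScard : Sset.card = 6 := by
      rw [hSset, Finset.card_image_of_injective _ hf]
      simp
    have hWS : Wf ⊆ Sset := by
      rw [hWfeq]
      intro x hx
      simp only [Finset.mem_insert, Finset.mem_singleton] at hx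
      rcases hx with rfl | rfl <;> exact hSmem _
    have hSfmem : ∀ u, u ∈ Sset \ Wf ↔ (∃ z, f z = u) ∧ u ∉ Wf := by
      intro u
      rw [Finset.mem_sdiff, hSset]
      simp
    have hSf4 : ∀ u ∈ Sset \ Wf, G.degree u = 4 := by
      intro u hu
      rw [hSfmem] at hu
      obtain ⟨⟨z, rfl⟩, hz⟩ := hu
      exact hdeg4 z hz
    have hSfcard : (Sset \ Wf).card = 4 := by
      rw [Finset.card_sdiff_of_subset hWS, hScard, hW2]
    set Q : Finset _ := F4 \ Sset with hQ
    have hQcard : Q.card + 4 = t := by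
      have hint : F4 ∩ Sset = Sset \ Wf := by
        ext u
        constructor
        · intro hu
          rcases Finset.mem_inter.1 hu with ⟨hu1, hu2⟩
          rw [Finset.mem_sdiff]
          refine ⟨hu2, fun hw => ?_⟩
          rw [hF4, Finset.mem_filter] at hu1
          rw [hWf, Finset.mem_filter] at hw
          omega
        · intro hu
          have h4 := hSf4 u hu
          rw [Finset.mem_sdiff] at hu
          exact Finset.mem_inter.2 ⟨by rw [hF4, Finset.mem_filter]; exact ⟨Finset.mem_univ _, h4⟩,
            hu.1⟩
      have := Finset.card_sdiff_add_card_inter F4 Sset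
      rw [hint, hSfcard, hfours] at this
      rw [hQ]
      exact this
    have hQRf : Q ⊆ Rf := fun g hg => hF4R (Finset.mem_sdiff.1 hg).1
    have hQF4 : Q ⊆ F4 := fun g hg => (Finset.mem_sdiff.1 hg).1
    -- lower bound for S-four vertices
    have hSfb : ∀ u ∈ Sset \ Wf,
        2 + (G.neighborFinset u ∩ Q).card ≤ (G.neighborFinset u ∩ Rf).card := by
      intro u hu
      rw [hSfmem] at hu
      obtain ⟨⟨z, rfl⟩, hz⟩ := hu
      have key : ∀ w1 w2 : _, w1 ≠ w2 → G.Adj (f z) w1 → G.Adj (f z) w2 →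
          w1 ∉ Wf → w2 ∉ Wf → (∃ z1, f z1 = w1) → (∃ z2, f z2 = w2) →
          2 + (G.neighborFinset (f z) ∩ Q).card ≤ (G.neighborFinset (f z) ∩ Rf).card := by
        intro w1 w2 hw12 had1 had2 hw1W hw2W hw1S hw2S
        have hw1Q : w1 ∉ Q := by
          intro hq
          rcases Finset.mem_sdiff.1 hq with ⟨_, hns⟩
          obtain ⟨z1, rfl⟩ := hw1S
          exact hns (hSmem z1)
        have hw2Q : w2 ∉ Q := by
          intro hq
          rcases Finset.mem_sdiff.1 hq with ⟨_, hns⟩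
          obtain ⟨z2, rfl⟩ := hw2S
          exact hns (hSmem z2)
        have hsub : insert w1 (insert w2 (G.neighborFinset (f z) ∩ Q))
            ⊆ G.neighborFinset (f z) ∩ Rf := by
          intro x hx
          simp only [Finset.mem_insert] at hx
          rcases hx with rfl | rfl | hx
          · exact Finset.mem_inter.2 ⟨(SimpleGraph.mem_neighborFinset _ _ _).2 had1,
              (hmemRf _).2 hw1W⟩
          · exact Finset.mem_inter.2 ⟨(SimpleGraph.mem_neighborFinset _ _ _).2 had2,
              (hmemRf _).2 hw2W⟩
          · rcases Finset.mem_inter.1 hx with ⟨hx1, hx2⟩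
            exact Finset.mem_inter.2 ⟨hx1, hQRf hx2⟩
        have hcard : (insert w1 (insert w2 (G.neighborFinset (f z) ∩ Q))).card
            = 2 + (G.neighborFinset (f z) ∩ Q).card := by
          rw [Finset.card_insert_of_notMem, Finset.card_insert_of_notMem]
          · omega
          · intro hmem2
            exact hw2Q (Finset.mem_inter.1 hmem2).2
          · intro hmem1
            simp only [Finset.mem_insert] at hmem1
            rcases hmem1 with rfl | hmem1
            · exact hw12 rfl
            · exact hw1Q (Finset.mem_inter.1 hmem1).2
        rw [← hcard]
        exact Finset.card_le_card hsub
      cases z with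
      | inl c =>
        have hc : c ≠ a0 := by
          intro h
          exact hz (h ▸ ha0)
        obtain ⟨b1, b2, hb12, hb1, hb2⟩ :
            ∃ b1 b2 : Fin 3, b1 ≠ b2 ∧ b1 ≠ b0 ∧ b2 ≠ b0 := by
          revert hb0
          fin_cases b0 <;> exact fun _ => by first
            | exact ⟨1, 2, by decide, by decide, by decide⟩
            | exact ⟨0, 2, by decide, by decide, by decide⟩
            | exact ⟨0, 1, by decide, by decide, by decide⟩
        refine key (f (Sum.inr b1)) (f (Sum.inr b2)) (hinr_inj _ _ hb12) (hadj c b1)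
          (hadj c b2) ?_ ?_ ⟨_, rfl⟩ ⟨_, rfl⟩
        · rw [hWfeq]
          simp only [Finset.mem_insert, Finset.mem_singleton]
          push_neg
          exact ⟨(hne_lr a0 b1).symm, hinr_inj b1 b0 hb1⟩
        · rw [hWfeq]
          simp only [Finset.mem_insert, Finset.mem_singleton]
          push_neg
          exact ⟨(hne_lr a0 b2).symm, hinr_inj b2 b0 hb2⟩
      | inr c =>
        have hc : c ≠ b0 := by
          intro h
          exact hz (h ▸ hb0)
        obtain ⟨a1, a2, ha12, ha1, ha2⟩ :
            ∃ a1 a2 : Fin 3, a1 ≠ a2 ∧ a1 ≠ a0 ∧ a2 ≠ a0 := by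
          revert ha0
          fin_cases a0 <;> exact fun _ => by first
            | exact ⟨1, 2, by decide, by decide, by decide⟩
            | exact ⟨0, 2, by decide, by decide, by decide⟩
            | exact ⟨0, 1, by decide, by decide, by decide⟩
        refine key (f (Sum.inl a1)) (f (Sum.inl a2)) (hinl_inj _ _ ha12) ((hadj a1 c).symm)
          ((hadj a2 c).symm) ?_ ?_ ⟨_, rfl⟩ ⟨_, rfl⟩
        · rw [hWfeq]
          simp only [Finset.mem_insert, Finset.mem_singleton]
          push_neg
          exact ⟨hinl_inj a1 a0 ha1, hne_lr a1 b0⟩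
        · rw [hWfeq]
          simp only [Finset.mem_insert, Finset.mem_singleton]
          push_neg
          exact ⟨hinl_inj a2 a0 ha2, hne_lr a2 b0⟩
    -- per-outside-four bound
    have hQlow : ∀ g ∈ Q, 3 ≤ (G.neighborFinset g ∩ (Rf \ Q)).card + Q.card := by
      intro g hg
      have hg4 : G.degree g = 4 := by
        have := hQF4 hg
        rw [hF4, Finset.mem_filter] at this
        exact this.2
      have hWle : (G.neighborFinset g ∩ Wf).card ≤ 2 := by
        calc (G.neighborFinset g ∩ Wf).card ≤ Wf.card :=
              Finset.card_le_card Finset.inter_subset_right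
          _ = 2 := hW2
      have hdecomp : (G.neighborFinset g ∩ Rf).card
          = (G.neighborFinset g ∩ (Rf \ Q)).card + (G.neighborFinset g ∩ Q).card := by
        have hu : G.neighborFinset g ∩ Rf
            = (G.neighborFinset g ∩ (Rf \ Q)) ∪ (G.neighborFinset g ∩ Q) := by
          rw [← Finset.inter_union_distrib_left, Finset.sdiff_union_of_subset hQRf]
        rw [hu, Finset.card_union_of_disjoint]
        exact Finset.disjoint_of_subset_left Finset.inter_subset_right
          (Finset.disjoint_of_subset_right Finset.inter_subset_right Finset.sdiff_disjoint)
      have hQle : (G.neighborFinset g ∩ Q).card ≤ Q.card - 1 := by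
        have hsub : G.neighborFinset g ∩ Q ⊆ Q.erase g := by
          intro x hx
          rcases Finset.mem_inter.1 hx with ⟨hx1, hx2⟩
          refine Finset.mem_erase.2 ⟨?_, hx2⟩
          intro h
          exact G.irrefl (h ▸ (SimpleGraph.mem_neighborFinset _ _ _).1 hx1)
        calc (G.neighborFinset g ∩ Q).card ≤ (Q.erase g).card := Finset.card_le_card hsub
          _ = Q.card - 1 := Finset.card_erase_of_mem hg
      have hQpos : 1 ≤ Q.card := Finset.card_pos.2 ⟨g, hg⟩
      have := hsplitd g
      omega
    -- total contribution of Q to the rest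
    have hE2 : 2 ≤ ∑ g ∈ Q, (G.neighborFinset g ∩ (Rf \ Q)).card := by
      rcases ht with rfl | rfl
      · -- t = 5, Q.card = 1
        have hq1 : Q.card = 1 := by omega
        have hperg : ∀ g ∈ Q, 2 ≤ (G.neighborFinset g ∩ (Rf \ Q)).card := by
          intro g hg
          have := hQlow g hg
          omega
        have := Finset.card_nsmul_le_sum Q (fun g => (G.neighborFinset g ∩ (Rf \ Q)).card) 2 hperg
        rw [hq1] at this
        simpa using this
      · -- t = 6, Q.card = 2
        have hq2 : Q.card = 2 := by omega
        have hperg : ∀ g ∈ Q, 1 ≤ (G.neighborFinset g ∩ (Rf \ Q)).card := by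
          intro g hg
          have := hQlow g hg
          omega
        have := Finset.card_nsmul_le_sum Q (fun g => (G.neighborFinset g ∩ (Rf \ Q)).card) 1 hperg
        rw [hq2] at this
        simpa using this
    have hEdc : ∑ u ∈ Rf \ Q, (G.neighborFinset u ∩ Q).card
        = ∑ g ∈ Q, (G.neighborFinset g ∩ (Rf \ Q)).card := double_count G (Rf \ Q) Q
    -- decomposition of the main sum
    have hsd1 : ∑ u ∈ Rf \ Q, (G.neighborFinset u ∩ Rf).card
        + ∑ u ∈ Q, (G.neighborFinset u ∩ Rf).card
        = ∑ u ∈ Rf, (G.neighborFinset u ∩ Rf).card := Finset.sum_sdiff hQRf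
    have hSfsub : Sset \ Wf ⊆ Rf \ Q := by
      intro u hu
      have h4 := hSf4 u hu
      rw [Finset.mem_sdiff] at hu ⊢
      refine ⟨hF4R (by rw [hF4, Finset.mem_filter]; exact ⟨Finset.mem_univ _, h4⟩), fun hq => ?_⟩
      exact (Finset.mem_sdiff.1 hq).2 hu.1
    have hsd2 : ∀ (fn : _ → ℕ), ∑ u ∈ (Rf \ Q) \ (Sset \ Wf), fn u
        + ∑ u ∈ Sset \ Wf, fn u = ∑ u ∈ Rf \ Q, fn u := fun fn => Finset.sum_sdiff hSfsub
    have hb1 : 2 * 4 + ∑ u ∈ Sset \ Wf, (G.neighborFinset u ∩ Q).card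
        ≤ ∑ u ∈ Sset \ Wf, (G.neighborFinset u ∩ Rf).card := by
      have := Finset.sum_le_sum hSfb
      rw [Finset.sum_add_distrib, Finset.sum_const, hSfcard] at this
      simpa using this
    have hb2 : ∑ u ∈ (Rf \ Q) \ (Sset \ Wf), (G.neighborFinset u ∩ Q).card
        ≤ ∑ u ∈ (Rf \ Q) \ (Sset \ Wf), (G.neighborFinset u ∩ Rf).card := by
      refine Finset.sum_le_sum fun u _ => Finset.card_le_card ?_
      exact Finset.inter_subset_inter (Finset.Subset.refl _) hQRf
    have hb3 : 2 * Q.card ≤ ∑ u ∈ Q, (G.neighborFinset u ∩ Rf).card := by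
      have := Finset.card_nsmul_le_sum Q (fun u => (G.neighborFinset u ∩ Rf).card) 2
        (fun u hu => hF42 u (hQF4 hu))
      simpa [mul_comm] using this
    -- assemble the contradiction
    have e1 := hsd2 (fun u => (G.neighborFinset u ∩ Q).card)
    have e2 := hsd2 (fun u => (G.neighborFinset u ∩ Rf).card)
    omega
  · -- main case: one side of the K33 misses Wf entirely
    rw [not_and_or] at hcase
    have hustar : ∃ u, G.degree u = 4 ∧ 3 ≤ (G.neighborFinset u ∩ Rf).card := by
      rcases hcase with hL | hR
      · push_neg at hL
        have hex : ∃ b : Fin 3, f (Sum.inr b) ∉ Wf := by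
          by_contra hno
          push_neg at hno
          have hsub : ({f (Sum.inr 0), f (Sum.inr 1), f (Sum.inr 2)} : Finset _) ⊆ Wf := by
            intro x hx
            simp only [Finset.mem_insert, Finset.mem_singleton] at hx
            rcases hx with rfl | rfl | rfl <;> exact hno _
          have := hcard3r _ hsub
          omega
        obtain ⟨b, hb⟩ := hex
        refine ⟨f (Sum.inr b), hdeg4 _ hb, hcard3l _ ?_⟩
        intro x hx
        simp only [Finset.mem_insert, Finset.mem_singleton] at hx
        rcases hx with rfl | rfl | rfl <;>
          exact Finset.mem_inter.2 ⟨(SimpleGraph.mem_neighborFinset _ _ _).2 ((hadj _ b).symm),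
            (hmemRf _).2 (hL _)⟩
      · push_neg at hR
        have hex : ∃ a : Fin 3, f (Sum.inl a) ∉ Wf := by
          by_contra hno
          push_neg at hno
          have hsub : ({f (Sum.inl 0), f (Sum.inl 1), f (Sum.inl 2)} : Finset _) ⊆ Wf := by
            intro x hx
            simp only [Finset.mem_insert, Finset.mem_singleton] at hx
            rcases hx with rfl | rfl | rfl <;> exact hno _
          have := hcard3l _ hsub
          omega
        obtain ⟨a, ha⟩ := hex
        refine ⟨f (Sum.inl a), hdeg4 _ ha, hcard3r _ ?_⟩
        intro x hx
        simp only [Finset.mem_insert, Finset.mem_singleton] at hx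
        rcases hx with rfl | rfl | rfl <;>
          exact Finset.mem_inter.2 ⟨(SimpleGraph.mem_neighborFinset _ _ _).2 (hadj a _),
            (hmemRf _).2 (hR _)⟩
    obtain ⟨u0, hu04, hu03⟩ := hustar
    have hu0F4 : u0 ∈ F4 := by rw [hF4, Finset.mem_filter]; exact ⟨Finset.mem_univ _, hu04⟩
    have hlow : 3 + 2 * (t - 1) ≤ ∑ u ∈ Rf, (G.neighborFinset u ∩ Rf).card := by
      have hstep1 : ∑ u ∈ F4, (G.neighborFinset u ∩ Rf).card
          ≤ ∑ u ∈ Rf, (G.neighborFinset u ∩ Rf).card :=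
        Finset.sum_le_sum_of_subset hF4R
      have hstep2 : (G.neighborFinset u0 ∩ Rf).card
          + ∑ u ∈ F4.erase u0, (G.neighborFinset u ∩ Rf).card
          = ∑ u ∈ F4, (G.neighborFinset u ∩ Rf).card :=
        Finset.add_sum_erase F4 (fun u => (G.neighborFinset u ∩ Rf).card) hu0F4
      have hstep3 : 2 * (t - 1) ≤ ∑ u ∈ F4.erase u0, (G.neighborFinset u ∩ Rf).card := by
        have := Finset.card_nsmul_le_sum (F4.erase u0)
          (fun u => (G.neighborFinset u ∩ Rf).card) 2
          (fun u hu => hF42 u (Finset.mem_of_mem_erase hu))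
        rw [Finset.card_erase_of_mem hu0F4, hfours] at this
        have h2 : (t - 1) • 2 = 2 * (t - 1) := by
          rw [smul_eq_mul, mul_comm]
        rw [h2] at this
        exact this
      omega
    have hbeta : ∑ w ∈ Wf, (G.neighborFinset w ∩ Wf).card ≤ 2 := by
      have hper : ∀ w ∈ Wf, (G.neighborFinset w ∩ Wf).card ≤ 1 := by
        intro w hw
        have hsub : G.neighborFinset w ∩ Wf ⊆ Wf.erase w := by
          intro x hx
          rcases Finset.mem_inter.1 hx with ⟨hx1, hx2⟩
          refine Finset.mem_erase.2 ⟨?_, hx2⟩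
          intro h
          exact G.irrefl (h ▸ (SimpleGraph.mem_neighborFinset _ _ _).1 hx1)
        calc (G.neighborFinset w ∩ Wf).card ≤ (Wf.erase w).card := Finset.card_le_card hsub
          _ = Wf.card - 1 := Finset.card_erase_of_mem hw
          _ ≤ 1 := by omega
      have := Finset.sum_le_card_nsmul Wf (fun w => (G.neighborFinset w ∩ Wf).card) 1 hper
      rw [hW2] at this
      simpa using this
    omega
end

section
/- Let n, i, k, t be integers with 4 ≤ t ≤ k − i − 1, i + t + 1 ≤ k ≤ n − i, and 1 ≤ i ≤ ⌊(n−t−1)/2⌋. Then the sequence π = (n−i, k, t, 3^t, 2^{k−i−t−1}, 1^{n−2−k+i}) of n terms is not potentially (K_6 − C_6)-graphic. -/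
instance K6mC6.decAdj : DecidableRel K6mC6.Adj :=
  fun a b => inferInstanceAs (Decidable ((SimpleGraph.cycleGraph 6)ᶜ.Adj a b))

lemma prism_deg (w : Fin 6) : (K6mC6.neighborFinset w).card = 3 := by
  fin_cases w <;> decide

lemma prism_common : ∀ x y w1 w2 w3 : Fin 6, w1 ≠ w2 → w1 ≠ w3 → w2 ≠ w3 →
    K6mC6.Adj w1 x → K6mC6.Adj w2 x → K6mC6.Adj w3 x →
    K6mC6.Adj w1 y → K6mC6.Adj w2 y → K6mC6.Adj w3 y → x = y := by decide

lemma extract_map_cons {α : Type} (d : α → ℕ) (s : Multiset α) (x : ℕ) (m : Multiset ℕ)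
    (h : s.map d = x ::ₘ m) : ∃ v s', s = v ::ₘ s' ∧ d v = x ∧ s'.map d = m := by
  have hx : x ∈ s.map d := by rw [h]; exact Multiset.mem_cons_self x m
  obtain ⟨v, hv, hdv⟩ := Multiset.mem_map.mp hx
  obtain ⟨s', rfl⟩ := Multiset.exists_cons_of_mem hv
  rw [Multiset.map_cons, hdv] at h
  exact ⟨v, s', rfl, hdv, (Multiset.cons_inj_right x).mp h⟩

/-- Necessity of condition (8) in Theorem 3.2: the sequence
`(n−i, k, t, 3ᵗ, 2^{k−i−t−1}, 1^{n−2−k+i})` is not potentially `K₆ − C₆`-graphic. -/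
theorem K6mC6_necessary_condition_8
    (n i k t : ℕ) (ht1 : 4 ≤ t) (ht2 : t ≤ k - i - 1) (hk1 : i + t + 1 ≤ k)
    (hk2 : k ≤ n - i) (hi1 : 1 ≤ i) (hi2 : i ≤ (n - t - 1) / 2) :
    ¬ PotentiallyGraphic K6mC6
      ([n - i, k, t] ++ List.replicate t 3 ++ List.replicate (k - i - t - 1) 2 ++
        List.replicate (n + i - k - 2) 1) := by
  rintro ⟨G, hdeg, f, hfinj⟩
  classical
  letI : DecidableRel G.Adj := Classical.decRel _
  unfold IsDegSeqOf at hdeg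
  have hdeg2 : Multiset.map (fun v => G.degree v) Finset.univ.val
      = (n - i) ::ₘ k ::ₘ t ::ₘ (Multiset.replicate t 3
          + Multiset.replicate (k - i - t - 1) 2 + Multiset.replicate (n + i - k - 2) 1) := by
    rw [show Multiset.map (fun v => G.degree v) Finset.univ.val
        = Multiset.map (fun v => (G.neighborSet v).ncard) Finset.univ.val from
      Multiset.map_congr rfl fun v _ => by
        rw [Set.ncard_eq_toFinset_card']; rfl]
    rw [hdeg]
    simp only [Multiset.coe_replicate, ← Multiset.cons_coe, ← Multiset.coe_add, add_assoc, Multiset.cons_add, Multiset.coe_nil, zero_add]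
  -- extract the three special vertices
  obtain ⟨u1, s1, hs1, hdu1, hm1⟩ := extract_map_cons _ _ _ _ hdeg2
  obtain ⟨u2, s2, hs2, hdu2, hm2⟩ := extract_map_cons _ _ _ _ hm1
  obtain ⟨u3, s3, hs3, hdu3, hm3⟩ := extract_map_cons _ _ _ _ hm2
  -- nodup facts
  have hnd1 : (u1 ::ₘ s1).Nodup := by rw [← hs1]; exact Finset.univ.nodup
  rw [Multiset.nodup_cons] at hnd1
  have hnd2 : (u2 ::ₘ s2).Nodup := by rw [← hs2]; exact hnd1.2
  rw [Multiset.nodup_cons] at hnd2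
  have hu2s1 : u2 ∈ s1 := by rw [hs2]; exact Multiset.mem_cons_self _ _
  have hu3s2 : u3 ∈ s2 := by rw [hs3]; exact Multiset.mem_cons_self _ _
  have hu3s1 : u3 ∈ s1 := by rw [hs2]; exact Multiset.mem_cons_of_mem hu3s2
  have h12 : u1 ≠ u2 := fun h => hnd1.1 (h ▸ hu2s1)
  have h13 : u1 ≠ u3 := fun h => hnd1.1 (h ▸ hu3s1)
  have h23 : u2 ≠ u3 := fun h => hnd2.1 (h ▸ hu3s2)
  -- membership in s3
  have hmem : ∀ v, v ≠ u1 → v ≠ u2 → v ≠ u3 → v ∈ s3 := by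
    intro v hv1 hv2 hv3
    have hv : v ∈ Finset.univ.val := Finset.mem_val.mpr (Finset.mem_univ v)
    rw [hs1, Multiset.mem_cons] at hv
    rcases hv with h | hv
    · exact absurd h hv1
    rw [hs2, Multiset.mem_cons] at hv
    rcases hv with h | hv
    · exact absurd h hv2
    rw [hs3, Multiset.mem_cons] at hv
    rcases hv with h | hv
    · exact absurd h hv3
    exact hv
  -- degrees on s3 are at most 3
  have hs3deg : ∀ v ∈ s3, G.degree v ≤ 3 := by
    intro v hv
    have hmm : G.degree v ∈ Multiset.map (fun v => G.degree v) s3 :=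
      Multiset.mem_map_of_mem _ hv
    rw [hm3] at hmm
    simp only [Multiset.mem_add, Multiset.mem_replicate] at hmm
    omega
  -- sum of min 2 over s3
  have hsum3 : (Multiset.map (fun v => min 2 (G.degree v)) s3).sum
      = 2 * t + 2 * (k - i - t - 1) + (n + i - k - 2) := by
    have hmm : Multiset.map (fun v => min 2 (G.degree v)) s3
        = Multiset.map (fun x => min 2 x) (Multiset.map (fun v => G.degree v) s3) := by
      rw [Multiset.map_map]; rfl
    rw [hmm, hm3]
    simp [Multiset.map_replicate, Multiset.sum_replicate]
    omega
  -- double counting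
  set P : Finset _ := {u1, u2} with hP
  set c : _ → ℕ := fun v => ((G.neighborFinset v) ∩ P).card with hc
  have hPcard : P.card ≤ 2 := by
    apply le_trans (Finset.card_insert_le _ _); simp
  have hcount : ∑ v, c v = G.degree u1 + G.degree u2 := by
    have h1 : ∀ v, c v = ∑ u ∈ P, if u ∈ G.neighborFinset v then 1 else 0 := by
      intro v
      rw [hc]
      simp only
      rw [Finset.inter_comm, ← Finset.filter_mem_eq_inter, Finset.card_filter]
    calc ∑ v, c v = ∑ v, ∑ u ∈ P, if u ∈ G.neighborFinset v then 1 else 0 :=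
          Finset.sum_congr rfl fun v _ => h1 v
      _ = ∑ u ∈ P, ∑ v, if u ∈ G.neighborFinset v then 1 else 0 := Finset.sum_comm
      _ = ∑ u ∈ P, G.degree u := by
          refine Finset.sum_congr rfl fun u _ => ?_
          rw [← Finset.card_filter]
          congr 1
          ext w
          simp [SimpleGraph.mem_neighborFinset, SimpleGraph.adj_comm]
      _ = G.degree u1 + G.degree u2 := Finset.sum_pair h12
  have hc_le2 : ∀ v, c v ≤ 2 :=
    fun v => le_trans (Finset.card_le_card Finset.inter_subset_right) hPcard
  have hc_le_deg : ∀ v, c v ≤ G.degree v :=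
    fun v => Finset.card_le_card Finset.inter_subset_left
  have hcu1 : c u1 ≤ 1 := by
    have hsub : G.neighborFinset u1 ∩ P ⊆ {u2} := by
      intro x hx
      rw [Finset.mem_inter] at hx
      rcases Finset.mem_insert.mp hx.2 with h | h
      · exact absurd ((G.mem_neighborFinset u1 u1).mp (h ▸ hx.1)) G.irrefl
      · exact h
    exact le_trans (Finset.card_le_card hsub) (le_of_eq (Finset.card_singleton u2))
  have hcu2 : c u2 ≤ 1 := by
    have hsub : G.neighborFinset u2 ∩ P ⊆ {u1} := by
      intro x hx
      rw [Finset.mem_inter] at hx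
      rcases Finset.mem_insert.mp hx.2 with h | h
      · exact Finset.mem_singleton.mpr h
      · rw [Finset.mem_singleton] at h
        exact absurd ((G.mem_neighborFinset u2 u2).mp (h ▸ hx.1)) G.irrefl
    exact le_trans (Finset.card_le_card hsub) (le_of_eq (Finset.card_singleton u1))
  have hdecomp : ∑ v, c v = c u1 + (c u2 + (c u3 + (s3.map c).sum)) := by
    rw [Finset.sum_eq_multiset_sum, hs1, hs2, hs3]
    simp [Multiset.sum_cons]
  -- key claim: every image vertex outside {u1,u2,u3} is adjacent to both u1 and u2
  have key : ∀ b, b ∈ s3 → 3 ≤ G.degree b → 2 ≤ c b := by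
    intro b hb hdb
    by_contra hlt
    push_neg at hlt
    obtain ⟨s4, hs4⟩ := Multiset.exists_cons_of_mem hb
    have h4 : (s3.map c).sum + 1 ≤ (s4.map (fun v => min 2 (G.degree v))).sum + 2 := by
      rw [hs4, Multiset.map_cons, Multiset.sum_cons]
      have hmono : (s4.map c).sum ≤ (s4.map (fun v => min 2 (G.degree v))).sum :=
        Multiset.sum_map_le_sum_map _ _ (fun v _ => le_min (hc_le2 v) (hc_le_deg v))
      omega
    have h5 : (s3.map (fun v => min 2 (G.degree v))).sum
        = 2 + (s4.map (fun v => min 2 (G.degree v))).sum := by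
      rw [hs4, Multiset.map_cons, Multiset.sum_cons, min_eq_left (by omega : 2 ≤ G.degree b)]
    have hge : G.degree u1 + G.degree u2 ≤ 1 + 1 + 2 + (s3.map c).sum := by
      rw [← hcount, hdecomp]
      have := hc_le2 u3
      omega
    rw [hdu1, hdu2] at hge
    omega
  -- the image of f
  set A : Finset _ := Finset.univ.image f with hA
  have hAcard : A.card = 6 := by
    rw [hA, Finset.card_image_of_injective _ hfinj]
    simp
  have hNsub : ∀ w : Fin 6, (K6mC6.neighborFinset w).image f ⊆ G.neighborFinset (f w) := by
    intro w x hx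
    obtain ⟨z, hz, rfl⟩ := Finset.mem_image.mp hx
    exact (G.mem_neighborFinset (f w) (f z)).mpr (f.map_adj ((K6mC6.mem_neighborFinset w z).mp hz))
  have hdegH : ∀ w : Fin 6, 3 ≤ G.degree (f w) := by
    intro w
    calc 3 = ((K6mC6.neighborFinset w).image f).card := by
          rw [Finset.card_image_of_injective _ hfinj, prism_deg]
      _ ≤ (G.neighborFinset (f w)).card := Finset.card_le_card (hNsub w)
  set U3 : Finset _ := {u1, u2, u3} with hU3
  have hU3card : U3.card ≤ 3 := by
    apply le_trans (Finset.card_insert_le _ _)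
    have := Finset.card_insert_le u2 ({u3} : Finset _)
    simp at this ⊢
    omega
  have hBcard : 3 ≤ (A \ U3).card := by
    have h := Finset.card_le_card_sdiff_add_card (s := A) (t := U3)
    omega
  -- the main structural fact for image vertices outside {u1,u2,u3}
  have main : ∀ b, b ∈ A \ U3 → ∃ w : Fin 6,
      f w = b ∧ (∃ x, K6mC6.Adj w x ∧ f x = u1) ∧ (∃ y, K6mC6.Adj w y ∧ f y = u2) := by
    intro b hb
    rw [Finset.mem_sdiff] at hb
    obtain ⟨hbA, hbU⟩ := hb
    obtain ⟨w, _, rfl⟩ := Finset.mem_image.mp hbA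
    have hne1 : f w ≠ u1 := fun h => hbU (by rw [hU3, h]; exact Finset.mem_insert_self _ _)
    have hne2 : f w ≠ u2 := fun h => hbU (by
      rw [hU3, h]; exact Finset.mem_insert_of_mem (Finset.mem_insert_self _ _))
    have hne3 : f w ≠ u3 := fun h => hbU (by
      rw [hU3, h]
      exact Finset.mem_insert_of_mem (Finset.mem_insert_of_mem (Finset.mem_singleton_self _)))
    have hbs3 : f w ∈ s3 := hmem _ hne1 hne2 hne3
    have hdeg3 : G.degree (f w) = 3 := le_antisymm (hs3deg _ hbs3) (hdegH w)
    have hc2 : 2 ≤ c (f w) := key _ hbs3 (hdegH w)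
    have hPsub : P ⊆ G.neighborFinset (f w) := by
      by_contra hPn
      obtain ⟨u, huP, hunot⟩ := Finset.not_subset.mp hPn
      have hss : G.neighborFinset (f w) ∩ P ⊆ P.erase u := by
        intro x hx
        rw [Finset.mem_inter] at hx
        exact Finset.mem_erase.mpr ⟨fun he => hunot (he ▸ hx.1), hx.2⟩
      have hcard : c (f w) ≤ (P.erase u).card := Finset.card_le_card hss
      rw [Finset.card_erase_of_mem huP] at hcard
      omega
    have heq : (K6mC6.neighborFinset w).image f = G.neighborFinset (f w) :=
      Finset.eq_of_subset_of_card_le (hNsub w) (by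
        rw [Finset.card_image_of_injective _ hfinj, prism_deg]
        exact le_of_eq hdeg3)
    have hu1m : u1 ∈ (K6mC6.neighborFinset w).image f := by
      rw [heq]; exact hPsub (Finset.mem_insert_self _ _)
    have hu2m : u2 ∈ (K6mC6.neighborFinset w).image f := by
      rw [heq]; exact hPsub (Finset.mem_insert_of_mem (Finset.mem_singleton_self _))
    obtain ⟨x, hxm, hxf⟩ := Finset.mem_image.mp hu1m
    obtain ⟨y, hym, hyf⟩ := Finset.mem_image.mp hu2m
    exact ⟨w, rfl, ⟨x, (K6mC6.mem_neighborFinset w x).mp hxm, hxf⟩,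
      ⟨y, (K6mC6.mem_neighborFinset w y).mp hym, hyf⟩⟩
  -- pick three distinct vertices of A \ U3
  obtain ⟨b1, hb1⟩ := Finset.card_pos.mp (by omega : 0 < (A \ U3).card)
  obtain ⟨b2, hb2⟩ := Finset.card_pos.mp (by
    rw [Finset.card_erase_of_mem hb1]; omega : 0 < ((A \ U3).erase b1).card)
  obtain ⟨b3, hb3⟩ := Finset.card_pos.mp (by
    rw [Finset.card_erase_of_mem hb2, Finset.card_erase_of_mem hb1]
    omega : 0 < (((A \ U3).erase b1).erase b2).card)
  obtain ⟨hb21, hb2m⟩ := Finset.mem_erase.mp hb2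
  obtain ⟨hb32, hb3e⟩ := Finset.mem_erase.mp hb3
  obtain ⟨hb31, hb3m⟩ := Finset.mem_erase.mp hb3e
  obtain ⟨w1, hw1b, ⟨x1, hx1a, hx1f⟩, ⟨y1, hy1a, hy1f⟩⟩ := main b1 hb1
  obtain ⟨w2, hw2b, ⟨x2, hx2a, hx2f⟩, ⟨y2, hy2a, hy2f⟩⟩ := main b2 hb2m
  obtain ⟨w3, hw3b, ⟨x3, hx3a, hx3f⟩, ⟨y3, hy3a, hy3f⟩⟩ := main b3 hb3m
  have hx21 : x2 = x1 := hfinj (by rw [hx2f, hx1f])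
  have hx31 : x3 = x1 := hfinj (by rw [hx3f, hx1f])
  have hy21 : y2 = y1 := hfinj (by rw [hy2f, hy1f])
  have hy31 : y3 = y1 := hfinj (by rw [hy3f, hy1f])
  rw [hx21] at hx2a; rw [hx31] at hx3a; rw [hy21] at hy2a; rw [hy31] at hy3a
  have hw12 : w1 ≠ w2 := fun h => hb21 (by rw [← hw1b, ← hw2b, h])
  have hw13 : w1 ≠ w3 := fun h => hb31 (by rw [← hw1b, ← hw3b, h])
  have hw23 : w2 ≠ w3 := fun h => hb32 (by rw [← hw2b, ← hw3b, h])
  have hxy : x1 = y1 := prism_common x1 y1 w1 w2 w3 hw12 hw13 hw23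
    hx1a hx2a hx3a hy1a hy2a hy3a
  exact h12 (by rw [← hx1f, ← hy1f, hxy])
end

section
/- Let n ≥ 6, k ≥ 0, t ≥ 0 with n − 3 − k − t ≥ 0, and let π = (d_1, d_2, d_3, 3^k, 2^t, 1^{n−3−k−t}) be a graphic sequence of n terms with d_1 ≥ d_2 ≥ d_3 ≥ 3. If π is potentially (K_6 − C_6)-graphic, then d_1 + d_2 + d_3 ≤ n + 2k + t + 1. -/
lemma prism_edge : ∀ a b c : Fin 6, a ≠ b → a ≠ c → b ≠ c →
    K6mC6.Adj a b ∨ K6mC6.Adj a c ∨ K6mC6.Adj b c := by unfold K6mC6; decide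

lemma prism_three_nbrs : ∀ u : Fin 6, ∃ x y z : Fin 6, x ≠ y ∧ x ≠ z ∧ y ≠ z ∧
    K6mC6.Adj u x ∧ K6mC6.Adj u y ∧ K6mC6.Adj u z := by unfold K6mC6; decide

lemma multiset_map_split {α β : Type} (f : α → β) :
    ∀ (a : Multiset β) (s : Multiset α) (b : Multiset β), s.map f = a + b →
    ∃ s1 s2 : Multiset α, s1 + s2 = s ∧ s1.map f = a ∧ s2.map f = b := by
  intro a
  induction a using Multiset.induction_on with
  | empty => exact fun s b h => ⟨0, s, by simp, by simp, by simpa using h⟩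
  | cons x a ih =>
    intro s b h
    have hx : x ∈ s.map f := by rw [h]; simp
    obtain ⟨y, hy, hfy⟩ := Multiset.mem_map.mp hx
    obtain ⟨s', rfl⟩ := Multiset.exists_cons_of_mem hy
    have hs' : s'.map f = a + b := by
      have h2 := h
      rw [Multiset.map_cons, hfy, Multiset.cons_add] at h2
      exact (Multiset.cons_inj_right x).mp h2
    obtain ⟨s1, s2, rfl, h1, h2⟩ := ih s' b hs'
    exact ⟨y ::ₘ s1, s2, by rw [Multiset.cons_add], by simp [h1, hfy], h2⟩

/-- Necessity of condition (6) in Theorem 3.2: if the graphic sequence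
`(d₁, d₂, d₃, 3ᵏ, 2ᵗ, 1^{n−3−k−t})` is potentially `K₆ − C₆`-graphic, then
`d₁ + d₂ + d₃ ≤ n + 2k + t + 1`. -/
theorem K6mC6_necessary_condition_6
    (n k t d₁ d₂ d₃ : ℕ) (hn : 6 ≤ n) (hkt : 3 + k + t ≤ n)
    (h12 : d₂ ≤ d₁) (h23 : d₃ ≤ d₂) (h3 : 3 ≤ d₃)
    (π : List ℕ)
    (hπ : π = [d₁, d₂, d₃] ++ List.replicate k 3 ++ List.replicate t 2 ++
          List.replicate (n - 3 - k - t) 1)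
    (hgraphic : IsGraphic π) (hpot : PotentiallyGraphic K6mC6 π) :
    d₁ + d₂ + d₃ ≤ n + 2 * k + t + 1 := by
  classical
  set m := n - 3 - k - t with hm
  obtain ⟨G, hdeg, f, hf⟩ := hpot
  haveI : DecidableRel G.Adj := Classical.decRel _
  -- degrees
  have hdeg' : Multiset.map (fun v => G.degree v) (Finset.univ : Finset (Fin π.length)).val
      = ({d₁, d₂, d₃} : Multiset ℕ)
        + (Multiset.replicate k 3 + Multiset.replicate t 2 + Multiset.replicate m 1) := by
    have e1 : Multiset.map (fun v => G.degree v) (Finset.univ : Finset (Fin π.length)).val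
        = Multiset.map (fun v => (G.neighborSet v).ncard) Finset.univ.val := by
      apply Multiset.map_congr rfl
      intro v _
      rw [Set.ncard_eq_toFinset_card', ← SimpleGraph.neighborFinset_def]
      rfl
    rw [e1, hdeg, hπ]
    simp only [← Multiset.coe_add, Multiset.coe_replicate]
    simp only [add_assoc]
    rfl
  -- split the vertex multiset into the three top vertices T and the rest
  obtain ⟨s1, s2, hsum, hs1, hs2⟩ := multiset_map_split (fun v => G.degree v)
    ({d₁, d₂, d₃} : Multiset ℕ) (Finset.univ : Finset (Fin π.length)).val
    (Multiset.replicate k 3 + Multiset.replicate t 2 + Multiset.replicate m 1) hdeg'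
  have hnd : s1.Nodup :=
    Multiset.nodup_of_le (hsum ▸ Multiset.le_add_right s1 s2) Finset.univ.nodup
  set T : Finset (Fin π.length) := ⟨s1, hnd⟩ with hTdef
  have hTcard : T.card = 3 := by
    have h := congrArg Multiset.card hs1
    exact (by simpa using h : s1.card = 3)
  have hTcval : (Finset.univ \ T).val = s2 := by
    rw [Finset.sdiff_val]
    show Finset.univ.val - s1 = s2
    rw [← hsum]
    exact add_tsub_cancel_left s1 s2
  have hsumT : ∑ v ∈ T, G.degree v = d₁ + d₂ + d₃ := by
    have h0 : ∑ v ∈ T, G.degree v = (Multiset.map (fun v => G.degree v) s1).sum := rfl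
    rw [h0, hs1]
    simp [Multiset.sum_cons]
    ring
  -- counting function
  set c : Fin π.length → ℕ := fun w => (T.filter (fun v => G.Adj w v)).card with hc
  have hcount : ∑ v ∈ T, G.degree v = ∑ w ∈ Finset.univ, c w := by
    have hdv : ∀ v : Fin π.length, G.degree v
        = ∑ w ∈ Finset.univ, (if G.Adj v w then 1 else 0) := by
      intro v
      rw [SimpleGraph.degree, SimpleGraph.neighborFinset_eq_filter, Finset.card_filter]
    calc ∑ v ∈ T, G.degree v
        = ∑ v ∈ T, ∑ w ∈ Finset.univ, (if G.Adj v w then 1 else 0) :=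
          Finset.sum_congr rfl (fun v _ => hdv v)
      _ = ∑ w ∈ Finset.univ, ∑ v ∈ T, (if G.Adj v w then 1 else 0) := Finset.sum_comm
      _ = ∑ w ∈ Finset.univ, c w := by
          apply Finset.sum_congr rfl
          intro w _
          show (∑ v ∈ T, if G.Adj v w then 1 else 0)
            = (Finset.filter (fun v => G.Adj w v) T).card
          rw [Finset.card_filter]
          apply Finset.sum_congr rfl
          intro v _
          simp [G.adj_comm]
  have hsplit : ∑ w ∈ Finset.univ, c w = ∑ w ∈ T, c w + ∑ w ∈ Finset.univ \ T, c w := by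
    rw [← Finset.sum_sdiff (Finset.subset_univ T)]
    ring
  have hT2 : ∀ w ∈ T, c w ≤ 2 := by
    intro w hw
    have hsub : T.filter (fun v => G.Adj w v) ⊆ T.erase w := by
      intro x hx
      rw [Finset.mem_filter] at hx
      exact Finset.mem_erase.mpr ⟨(G.ne_of_adj hx.2).symm, hx.1⟩
    calc c w ≤ (T.erase w).card := Finset.card_le_card hsub
      _ = 2 := by rw [Finset.card_erase_of_mem hw, hTcard]
  -- the image of the prism
  set S : Finset (Fin π.length) := Finset.image (fun u => f u) Finset.univ with hS
  have hScard : S.card = 6 := by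
    rw [hS, Finset.card_image_of_injective _ hf]
    simp
  -- two adjacent vertices outside T
  obtain ⟨w₁, w₂, hw1S, hw1T, hw2S, hw2T, hadj⟩ :
      ∃ w₁ w₂, w₁ ∈ S ∧ w₁ ∉ T ∧ w₂ ∈ S ∧ w₂ ∉ T ∧ G.Adj w₁ w₂ := by
    have h3le : 3 ≤ (S \ T).card := by
      have := Finset.le_card_sdiff T S
      omega
    obtain ⟨U, hUsub, hUcard⟩ := Finset.exists_subset_card_eq h3le
    obtain ⟨a, b, c0, hab, hac, hbc, hUeq⟩ := Finset.card_eq_three.mp hUcard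
    have haU : a ∈ S \ T := hUsub (by rw [hUeq]; simp)
    have hbU : b ∈ S \ T := hUsub (by rw [hUeq]; simp)
    have hcU : c0 ∈ S \ T := hUsub (by rw [hUeq]; simp)
    rw [Finset.mem_sdiff] at haU hbU hcU
    obtain ⟨ua, -, rfl⟩ := Finset.mem_image.mp haU.1
    obtain ⟨ub, -, rfl⟩ := Finset.mem_image.mp hbU.1
    obtain ⟨uc, -, rfl⟩ := Finset.mem_image.mp hcU.1
    have h1 : ua ≠ ub := fun h => hab (by rw [h])
    have h2 : ua ≠ uc := fun h => hac (by rw [h])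
    have h3' : ub ≠ uc := fun h => hbc (by rw [h])
    rcases prism_edge ua ub uc h1 h2 h3' with h | h | h
    · exact ⟨f ua, f ub, haU.1, haU.2, hbU.1, hbU.2, f.map_adj h⟩
    · exact ⟨f ua, f uc, haU.1, haU.2, hcU.1, hcU.2, f.map_adj h⟩
    · exact ⟨f ub, f uc, hbU.1, hbU.2, hcU.1, hcU.2, f.map_adj h⟩
  have hw12 : w₁ ≠ w₂ := G.ne_of_adj hadj
  -- degrees outside T are at most 3
  have hle3 : ∀ w : Fin π.length, w ∉ T → G.degree w ≤ 3 := by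
    intro w hw
    have hws2 : w ∈ s2 := by
      have hwu : w ∈ s1 + s2 := by rw [hsum]; exact Finset.mem_univ w
      rcases Multiset.mem_add.mp hwu with h | h
      · exact absurd h hw
      · exact h
    have hmem : G.degree w ∈ Multiset.map (fun v => G.degree v) s2 :=
      Multiset.mem_map_of_mem _ hws2
    rw [hs2] at hmem
    simp only [Multiset.mem_add, Multiset.mem_replicate] at hmem
    omega
  -- vertices of S have degree at least 3
  have hgeS : ∀ w ∈ S, 3 ≤ G.degree w := by
    intro w hw
    obtain ⟨u, -, rfl⟩ := Finset.mem_image.mp hw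
    obtain ⟨x, y, z, hxy, hxz, hyz, ax, ay, az⟩ := prism_three_nbrs u
    have hsub : ({f x, f y, f z} : Finset (Fin π.length)) ⊆ G.neighborFinset (f u) := by
      intro w' hw'
      simp only [Finset.mem_insert, Finset.mem_singleton] at hw'
      rw [SimpleGraph.mem_neighborFinset]
      rcases hw' with rfl | rfl | rfl
      · exact f.map_adj ax
      · exact f.map_adj ay
      · exact f.map_adj az
    have hcard3 : ({f x, f y, f z} : Finset (Fin π.length)).card = 3 := by
      rw [Finset.card_insert_of_notMem, Finset.card_insert_of_notMem,
        Finset.card_singleton]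
      · simp [hf.ne hyz]
      · simp [hf.ne hxy, hf.ne hxz]
    calc (3 : ℕ) = ({f x, f y, f z} : Finset (Fin π.length)).card := hcard3.symm
      _ ≤ (G.neighborFinset (f u)).card := Finset.card_le_card hsub
      _ = G.degree (f u) := rfl
  have hdw1 : G.degree w₁ = 3 := le_antisymm (hle3 w₁ hw1T) (hgeS w₁ hw1S)
  have hdw2 : G.degree w₂ = 3 := le_antisymm (hle3 w₂ hw2T) (hgeS w₂ hw2S)
  -- crucial saving: c w₁ ≤ 2 and c w₂ ≤ 2
  have hkey : ∀ w w' : Fin π.length, G.Adj w w' → w' ∉ T → G.degree w = 3 → c w ≤ 2 := by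
    intro w w' hA hT' hd3
    have hsub : T.filter (fun v => G.Adj w v) ⊆ (G.neighborFinset w).erase w' := by
      intro x hx
      rw [Finset.mem_filter] at hx
      refine Finset.mem_erase.mpr ⟨fun h => hT' (h ▸ hx.1), ?_⟩
      rw [SimpleGraph.mem_neighborFinset]
      exact hx.2
    calc c w ≤ ((G.neighborFinset w).erase w').card := Finset.card_le_card hsub
      _ = G.degree w - 1 := by
          rw [Finset.card_erase_of_mem (SimpleGraph.mem_neighborFinset _ _ _ |>.mpr hA)]
          rfl
      _ = 2 := by omega
  have hcw1 : c w₁ ≤ 2 := hkey w₁ w₂ hadj hw2T hdw1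
  have hcw2 : c w₂ ≤ 2 := hkey w₂ w₁ hadj.symm hw1T hdw2
  -- general bound outside T
  have hcmin : ∀ w ∈ Finset.univ \ T, c w ≤ min (G.degree w) 3 := by
    intro w _
    refine le_min ?_ ?_
    · refine Finset.card_le_card ?_
      intro x hx
      rw [Finset.mem_filter] at hx
      rw [SimpleGraph.mem_neighborFinset]
      exact hx.2
    · calc c w ≤ T.card := Finset.card_le_card (Finset.filter_subset _ _)
        _ = 3 := hTcard
  -- total min-sum outside T
  have hminsum : ∑ w ∈ Finset.univ \ T, min (G.degree w) 3 = 3 * k + 2 * t + m := by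
    have h0 : ∑ w ∈ Finset.univ \ T, min (G.degree w) 3
        = (Multiset.map (fun w => min (G.degree w) 3) (Finset.univ \ T).val).sum := rfl
    rw [h0, hTcval]
    have h1 : Multiset.map (fun w => min (G.degree w) 3) s2
        = Multiset.map (fun x => min x 3) (Multiset.map (fun v => G.degree v) s2) := by
      rw [Multiset.map_map]
      rfl
    rw [h1, hs2]
    simp [Multiset.map_replicate, Multiset.sum_replicate]
    ring
  -- decompose the sum outside T at w₁ and w₂
  have hw1mem : w₁ ∈ Finset.univ \ T := Finset.mem_sdiff.mpr ⟨Finset.mem_univ _, hw1T⟩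
  have hw2mem : w₂ ∈ (Finset.univ \ T).erase w₁ :=
    Finset.mem_erase.mpr ⟨hw12.symm, Finset.mem_sdiff.mpr ⟨Finset.mem_univ _, hw2T⟩⟩
  have hdecomp : ∀ g : Fin π.length → ℕ,
      ∑ w ∈ Finset.univ \ T, g w
        = g w₁ + (g w₂ + ∑ w ∈ ((Finset.univ \ T).erase w₁).erase w₂, g w) := by
    intro g
    rw [← Finset.add_sum_erase _ g hw1mem, ← Finset.add_sum_erase _ g hw2mem]
  -- combine
  have hbound : ∑ w ∈ Finset.univ \ T, c w ≤ 3 * k + 2 * t + m - 2 := by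
    have hR : ∑ w ∈ ((Finset.univ \ T).erase w₁).erase w₂, c w
        ≤ ∑ w ∈ ((Finset.univ \ T).erase w₁).erase w₂, min (G.degree w) 3 := by
      apply Finset.sum_le_sum
      intro w hw
      exact hcmin w (Finset.mem_of_mem_erase (Finset.mem_of_mem_erase hw))
    have e1 := hdecomp c
    have e2 := hdecomp (fun w => min (G.degree w) 3)
    rw [hminsum] at e2
    rw [e1]
    have hm1 : min (G.degree w₁) 3 = 3 := by simp [hdw1]
    have hm2 : min (G.degree w₂) 3 = 3 := by simp [hdw2]
    rw [hm1, hm2] at e2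
    omega
  have hTsum : ∑ w ∈ T, c w ≤ 6 := by
    calc ∑ w ∈ T, c w ≤ ∑ _w ∈ T, 2 := Finset.sum_le_sum hT2
      _ = 6 := by rw [Finset.sum_const, hTcard]; simp
  have hmge : 3 * k + 2 * t + m ≥ 2 := by omega
  have hfinal : d₁ + d₂ + d₃ ≤ 6 + (3 * k + 2 * t + m - 2) := by
    rw [← hsumT, hcount, hsplit]
    omega
  omega
end

section
/- For every n ≥ 7, the sequence π = (n−2, 4, 3^5, 1^{n−7}) of n terms is not potentially K_{3,3}-graphic. -/
open Finset SimpleGraph Sum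

instance : DecidableRel K33.Adj := fun a b =>
  decidable_of_iff ((a.isLeft ∧ b.isRight) ∨ (a.isRight ∧ b.isLeft)) Iff.rfl

lemma K33_nb_inl (i : Fin 3) :
    K33.neighborFinset (inl i) = {inr 0, inr 1, inr 2} := by fin_cases i <;> decide

lemma K33_nb_inr (i : Fin 3) :
    K33.neighborFinset (inr i) = {inl 0, inl 1, inl 2} := by fin_cases i <;> decide

lemma K33_deg (u : Fin 3 ⊕ Fin 3) : (K33.neighborFinset u).card = 3 := by revert u; decide

/-- transposition of `0` and `i` on `Fin 3` -/
def tr (i : Fin 3) : Fin 3 → Fin 3 := fun j => if j = 0 then i else if j = i then 0 else j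

/-- transposition of `1` and `2` on `Fin 3` -/
def tr12 : Fin 3 → Fin 3 := fun j => if j = 1 then 2 else if j = 2 then 1 else j

def homL (i : Fin 3) : K33 →g K33 :=
  ⟨Sum.map (tr i) id, fun {a b} h => by
    revert h
    exact (by decide : ∀ i a b,
      K33.Adj a b → K33.Adj (Sum.map (tr i) id a) (Sum.map (tr i) id b)) i a b⟩

def homR (i : Fin 3) : K33 →g K33 :=
  ⟨fun s => Sum.swap (Sum.map (tr i) id s), fun {a b} h => by
    revert h
    exact (by decide : ∀ i a b, K33.Adj a b →
      K33.Adj (Sum.swap (Sum.map (tr i) id a)) (Sum.swap (Sum.map (tr i) id b))) i a b⟩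

def hom12 : K33 →g K33 :=
  ⟨Sum.map tr12 id, fun {a b} h => by
    revert h
    exact (by decide :
      ∀ a b, K33.Adj a b → K33.Adj (Sum.map tr12 id a) (Sum.map tr12 id b)) a b⟩

lemma homL_inj (i : Fin 3) : Function.Injective (homL i) := by
  have : ∀ i : Fin 3, Function.Injective (Sum.map (tr i) id :
      Fin 3 ⊕ Fin 3 → Fin 3 ⊕ Fin 3) := by decide
  exact this i

lemma homR_inj (i : Fin 3) : Function.Injective (homR i) := by
  have : ∀ i : Fin 3, Function.Injective ((fun s => Sum.swap (Sum.map (tr i) id s)) :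
      Fin 3 ⊕ Fin 3 → Fin 3 ⊕ Fin 3) := by decide
  exact this i

lemma hom12_inj : Function.Injective hom12 := by
  have : Function.Injective (Sum.map tr12 id :
      Fin 3 ⊕ Fin 3 → Fin 3 ⊕ Fin 3) := by decide
  exact this

lemma homL_eval (i : Fin 3) : homL i (inl 0) = inl i := by
  revert i; decide

lemma homR_eval (i : Fin 3) : homR i (inl 0) = inr i := by
  revert i; decide

lemma hom12_eval0 : hom12 (inl 0) = inl 0 := by decide
lemma hom12_eval1 : hom12 (inl 1) = inl 2 := by decide

theorem main_contra (n : ℕ) (hn : 7 ≤ n) (N : ℕ) (hN : N = n) (G : SimpleGraph (Fin N))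
    [DecidableRel G.Adj]
    (hdeg : Multiset.map (fun v => G.degree v) Finset.univ.val
      = (([n - 2, 4] ++ List.replicate 5 3 ++ List.replicate (n - 7) 1 : List ℕ) : Multiset ℕ))
    (f : K33 →g G) (hf : Function.Injective f) : False := by
  -- counting degrees
  have key : ∀ m : ℕ, (univ.filter (fun v => G.degree v = m)).card
      = ([n - 2, 4] ++ List.replicate 5 3 ++ List.replicate (n - 7) 1 : List ℕ).count m := by
    intro m
    have h := congrArg (Multiset.count m) hdeg
    rw [Multiset.count_map, Multiset.coe_count] at h
    rw [← h, Finset.card, Finset.filter_val]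
    congr 1
    simp [eq_comm]
  have c1 : (univ.filter (fun v => G.degree v = n - 2)).card = 1 := by
    rw [key]
    simp [List.count_append, List.count_replicate, List.count_cons, beq_iff_eq]
    omega
  have c2 : (univ.filter (fun v => G.degree v = 4)).card = 1 := by
    rw [key]
    simp [List.count_append, List.count_replicate, List.count_cons, beq_iff_eq]
    omega
  have c3 : (univ.filter (fun v => G.degree v = 3)).card = 5 := by
    rw [key]
    simp [List.count_append, List.count_replicate, List.count_cons, beq_iff_eq]
    omega
  obtain ⟨a, ha⟩ := Finset.card_eq_one.mp c1
  obtain ⟨b, hb⟩ := Finset.card_eq_one.mp c2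
  have hda : G.degree a = n - 2 := by
    have : a ∈ univ.filter (fun v => G.degree v = n - 2) := ha ▸ Finset.mem_singleton_self a
    exact (Finset.mem_filter.mp this).2
  have hdb : G.degree b = 4 := by
    have : b ∈ univ.filter (fun v => G.degree v = 4) := hb ▸ Finset.mem_singleton_self b
    exact (Finset.mem_filter.mp this).2
  have ua : ∀ v, G.degree v = n - 2 → v = a := by
    intro v hv
    have : v ∈ univ.filter (fun v => G.degree v = n - 2) := Finset.mem_filter.mpr ⟨mem_univ _, hv⟩
    rw [ha, Finset.mem_singleton] at this
    exact this
  have ub : ∀ v, G.degree v = 4 → v = b := by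
    intro v hv
    have : v ∈ univ.filter (fun v => G.degree v = 4) := Finset.mem_filter.mpr ⟨mem_univ _, hv⟩
    rw [hb, Finset.mem_singleton] at this
    exact this
  have hmem : ∀ v, G.degree v = n - 2 ∨ G.degree v = 4 ∨ G.degree v = 3 ∨ G.degree v = 1 := by
    intro v
    have hv : G.degree v ∈ Multiset.map (fun v => G.degree v) Finset.univ.val :=
      Multiset.mem_map_of_mem _ (mem_univ v)
    rw [hdeg, Multiset.mem_coe] at hv
    simp [List.mem_append, List.mem_replicate] at hv
    tauto
  -- at most one non-neighbor of a
  have NN : ∀ x y : Fin N, x ≠ a → ¬ G.Adj a x → y ≠ a → ¬ G.Adj a y → x = y := by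
    intro x y hx hnx hy hny
    have haa : a ∉ G.neighborFinset a := by simp
    have hs : (insert a (G.neighborFinset a)).card = n - 1 := by
      rw [Finset.card_insert_of_notMem haa,
        show (G.neighborFinset a).card = G.degree a from rfl, hda]
      omega
    have hcs : (insert a (G.neighborFinset a))ᶜ.card = 1 := by
      rw [Finset.card_compl, hs, Fintype.card_fin, hN]
      omega
    have hx' : x ∈ (insert a (G.neighborFinset a))ᶜ := by
      simp only [Finset.mem_compl, Finset.mem_insert, mem_neighborFinset]
      tauto
    have hy' : y ∈ (insert a (G.neighborFinset a))ᶜ := by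
      simp only [Finset.mem_compl, Finset.mem_insert, mem_neighborFinset]
      tauto
    exact Finset.card_le_one.mp hcs.le x hx' y hy'
  -- generic facts about injective homs g : K33 →g G
  have himg : ∀ (g : K33 →g G) (u : Fin 3 ⊕ Fin 3),
      (K33.neighborFinset u).image g ⊆ G.neighborFinset (g u) := by
    intro g u v hv
    obtain ⟨w, hw, rfl⟩ := Finset.mem_image.mp hv
    exact (mem_neighborFinset _ _ _).mpr (g.map_adj ((mem_neighborFinset _ _ _).mp hw))
  have L1 : ∀ (g : K33 →g G), Function.Injective g → ∀ u, 3 ≤ G.degree (g u) := by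
    intro g hg u
    have := Finset.card_le_card (himg g u)
    rwa [Finset.card_image_of_injective _ hg, K33_deg] at this
  have L2 : ∀ (g : K33 →g G), Function.Injective g → ∀ u, G.degree (g u) = 3 →
      G.neighborFinset (g u) = (K33.neighborFinset u).image g := by
    intro g hg u h3
    refine (Finset.eq_of_subset_of_card_le (himg g u) ?_).symm
    rw [Finset.card_image_of_injective _ hg, K33_deg]
    exact h3.le
  have classify : ∀ (g : K33 →g G), Function.Injective g → ∀ u,
      g u = a ∨ g u = b ∨ G.degree (g u) = 3 := by
    intro g hg u
    rcases hmem (g u) with h | h | h | h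
    · exact Or.inl (ua _ h)
    · exact Or.inr (Or.inl (ub _ h))
    · exact Or.inr (Or.inr h)
    · exact absurd (L1 g hg u) (by omega)
  -- case 2 with both special vertices pinned
  have case2b : ∀ (g : K33 →g G), Function.Injective g →
      G.degree (g (inl 0)) = n - 2 → G.degree (g (inl 1)) = 4 → False := by
    intro g hg hga hgb
    have hfa : g (inl 0) = a := ua _ hga
    have hfb : g (inl 1) = b := ub _ hgb
    have hab : a ≠ b := by
      intro h
      rw [← h, hda] at hdb
      omega
    have h2 : G.degree (g (inl 2)) = 3 := by
      rcases classify g hg (inl 2) with h | h | h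
      · exact absurd (hg (h.trans hfa.symm)) (by decide)
      · exact absurd (hg (h.trans hfb.symm)) (by decide)
      · exact h
    have hr : ∀ j : Fin 3, G.degree (g (inr j)) = 3 := by
      intro j
      rcases classify g hg (inr j) with h | h | h
      · exact absurd (hg (h.trans hfa.symm)) (by simp)
      · exact absurd (hg (h.trans hfb.symm)) (by simp)
      · exact h
    set x := g (inl 2) with hxdef
    have hx_ne : x ≠ a := by
      rw [← hfa]
      intro h
      exact absurd (hg h) (by decide)
    have hxadj : ¬ G.Adj a x := by
      intro hadj
      have : a ∈ G.neighborFinset x := (mem_neighborFinset _ _ _).mpr (G.adj_symm hadj)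
      rw [L2 g hg _ h2, K33_nb_inl] at this
      obtain ⟨w, hw, hwa⟩ := Finset.mem_image.mp this
      rw [← hfa] at hwa
      have := hg hwa
      subst this
      simp at hw
    have NNx : ∀ y, y ≠ a → ¬ G.Adj a y → y = x := fun y hy hnadj =>
      NN y x hy hnadj hx_ne hxadj
    set T := ({inl 2, inr 0, inr 1, inr 2} : Finset (Fin 3 ⊕ Fin 3)).image g with hTdef
    have hTcard : T.card = 4 := by
      rw [Finset.card_image_of_injective _ hg]
      decide
    have hTdeg : ∀ v ∈ T, G.degree v = 3 := by
      intro v hv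
      obtain ⟨u, hu, rfl⟩ := Finset.mem_image.mp hv
      simp only [Finset.mem_insert, Finset.mem_singleton] at hu
      rcases hu with rfl | rfl | rfl | rfl
      · exact h2
      · exact hr 0
      · exact hr 1
      · exact hr 2
    have hTsub : T ⊆ univ.filter (fun v => G.degree v = 3) := fun v hv =>
      Finset.mem_filter.mpr ⟨mem_univ _, hTdeg v hv⟩
    obtain ⟨w, hwD3, hwT⟩ : ∃ w ∈ univ.filter (fun v => G.degree v = 3), w ∉ T := by
      by_contra hcon
      push_neg at hcon
      have := Finset.card_le_card hcon
      rw [c3, hTcard] at this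
      omega
    have hw3 : G.degree w = 3 := (Finset.mem_filter.mp hwD3).2
    have hwrange : ∀ u, g u ≠ w := by
      intro u hu
      match u with
      | inl 0 =>
        rw [hfa] at hu
        rw [← hu, hda] at hw3
        omega
      | inl 1 =>
        rw [hfb] at hu
        rw [← hu, hdb] at hw3
        omega
      | inl 2 => exact hwT (hu ▸ Finset.mem_image_of_mem g (by decide))
      | inr j =>
        refine hwT (hu ▸ Finset.mem_image_of_mem g ?_)
        fin_cases j <;> decide
    have hwa : w ≠ a := by
      intro h
      rw [h, hda] at hw3
      omega
    have hxT : x ∈ T := Finset.mem_image_of_mem g (by decide)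
    have hadj_aw : G.Adj a w := by
      by_contra hcon
      have := NNx w hwa hcon
      rw [this] at hwT
      exact hwT hxT
    -- the neighbors of w are contained in {a, b}
    have hnb : ∀ y, G.Adj w y → y = a ∨ y = b := by
      intro y hy
      by_cases hya : y = a
      · exact Or.inl hya
      have hnadjwx : ¬ G.Adj w x := by
        intro hadj
        have : w ∈ G.neighborFinset x := (mem_neighborFinset _ _ _).mpr (G.adj_symm hadj)
        rw [L2 g hg _ h2] at this
        obtain ⟨v, _, hv⟩ := Finset.mem_image.mp this
        exact hwrange v hv
      have hady : G.Adj a y := by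
        by_contra hnad
        have hyx := NNx y hya hnad
        rw [hyx] at hy
        exact hnadjwx hy
      rcases hmem y with h | h | h | h
      · exact absurd (ua _ h) hya
      · exact Or.inr (ub _ h)
      · -- degree-3 neighbor of w other than a, b : contradiction via counting
        exfalso
        have hyT : y ∉ T := by
          intro hyT
          obtain ⟨u, hu, hyu⟩ := Finset.mem_image.mp hyT
          have hdu : G.degree (g u) = 3 := hTdeg _ (Finset.mem_image_of_mem g hu)
          have hwin : w ∈ G.neighborFinset (g u) := by
            rw [hyu]
            exact (mem_neighborFinset _ _ _).mpr (G.adj_symm (hyu ▸ hy))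
          rw [L2 g hg u hdu] at hwin
          obtain ⟨v, _, hv⟩ := Finset.mem_image.mp hwin
          exact hwrange v hv
        have hyw : y ≠ w := fun h => G.irrefl (h ▸ hy)
        have hsub : insert y (insert w T) ⊆ univ.filter (fun v => G.degree v = 3) := by
          intro z hz
          simp only [Finset.mem_insert] at hz
          rcases hz with rfl | rfl | hz
          · exact Finset.mem_filter.mpr ⟨mem_univ _, h⟩
          · exact hwD3
          · exact hTsub hz
        have hc6 : (insert y (insert w T)).card = 6 := by
          rw [Finset.card_insert_of_notMem, Finset.card_insert_of_notMem hwT, hTcard]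
          simp only [Finset.mem_insert]
          push_neg
          exact ⟨hyw, hyT⟩
        have := Finset.card_le_card hsub
        rw [hc6, c3] at this
        omega
      · -- degree-1 vertex adjacent to both a and w
        exfalso
        have haw : a ≠ w := fun h => hwa h.symm
        have hsub : ({a, w} : Finset (Fin N)) ⊆ G.neighborFinset y := by
          intro z hz
          simp only [Finset.mem_insert, Finset.mem_singleton] at hz
          rcases hz with rfl | rfl
          · exact (mem_neighborFinset _ _ _).mpr (G.adj_symm hady)
          · exact (mem_neighborFinset _ _ _).mpr (G.adj_symm hy)
        have := Finset.card_le_card hsub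
        rw [Finset.card_insert_of_notMem (by simpa using haw), Finset.card_singleton] at this
        rw [show (G.neighborFinset y).card = G.degree y from rfl, h] at this
        omega
    have hnbsub : G.neighborFinset w ⊆ {a, b} := by
      intro y hy
      rcases hnb y ((mem_neighborFinset _ _ _).mp hy) with rfl | rfl
      · exact Finset.mem_insert_self _ _
      · exact Finset.mem_insert_of_mem (Finset.mem_singleton_self _)
    have := Finset.card_le_card hnbsub
    rw [show (G.neighborFinset w).card = G.degree w from rfl, hw3,
      Finset.card_insert_of_notMem (by simpa using hab), Finset.card_singleton] at this
    omega
  -- non-adjacency of a to degree-3 images when a is an image on the same side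
  have Hnadj : ∀ (g : K33 →g G), Function.Injective g → ∀ i j : Fin 3, g (inl i) = a →
      G.degree (g (inl j)) = 3 → ¬ G.Adj a (g (inl j)) := by
    intro g hg i j hgi h3 hadj
    have : a ∈ G.neighborFinset (g (inl j)) := (mem_neighborFinset _ _ _).mpr (G.adj_symm hadj)
    rw [L2 g hg _ h3, K33_nb_inl] at this
    obtain ⟨w, hw, hwa⟩ := Finset.mem_image.mp this
    rw [← hgi] at hwa
    have := hg hwa
    subst this
    simp at hw
  -- case 2: a is an image, pinned at inl 0
  have case2 : ∀ (g : K33 →g G), Function.Injective g →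
      G.degree (g (inl 0)) = n - 2 → False := by
    intro g hg hga
    have hfa : g (inl 0) = a := ua _ hga
    have hne3 : ∀ j : Fin 3, j ≠ 0 → G.degree (g (inl j)) = 3 ∨ g (inl j) = b := by
      intro j hj
      rcases classify g hg (inl j) with h | h | h
      · exact absurd (hg (h.trans hfa.symm)) (by simp [hj])
      · exact Or.inr h
      · exact Or.inl h
    rcases hne3 1 (by decide) with h1 | h1
    · rcases hne3 2 (by decide) with h2 | h2
      · -- both same-side vertices have degree 3: two non-neighbors of a
        have n1 := Hnadj g hg 0 1 hfa h1
        have n2 := Hnadj g hg 0 2 hfa h2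
        have e1 : g (inl 1) ≠ a := by
          rw [← hfa]; intro h; exact absurd (hg h) (by decide)
        have e2 : g (inl 2) ≠ a := by
          rw [← hfa]; intro h; exact absurd (hg h) (by decide)
        have := NN _ _ e1 n1 e2 n2
        exact absurd (hg this) (by decide)
      · -- g (inl 2) = b : swap 1 and 2
        refine case2b (g.comp hom12) (by
          rw [SimpleGraph.Hom.coe_comp]
          exact hg.comp hom12_inj) ?_ ?_
        · show G.degree (g (hom12 (inl 0))) = n - 2
          rw [hom12_eval0]
          exact hga
        · show G.degree (g (hom12 (inl 1))) = 4
          rw [hom12_eval1, h2]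
          exact hdb
    · exact case2b g hg hga (by rw [h1]; exact hdb)
  -- main case split
  by_cases hA : ∃ u, f u = a
  · obtain ⟨u0, hu0⟩ := hA
    match u0 with
    | inl i =>
      refine case2 (f.comp (homL i)) (by
        rw [SimpleGraph.Hom.coe_comp]
        exact hf.comp (homL_inj i)) ?_
      show G.degree (f (homL i (inl 0))) = n - 2
      rw [homL_eval, hu0]
      exact hda
    | inr i =>
      refine case2 (f.comp (homR i)) (by
        rw [SimpleGraph.Hom.coe_comp]
        exact hf.comp (homR_inj i)) ?_
      show G.degree (f (homR i (inl 0))) = n - 2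
      rw [homR_eval, hu0]
      exact hda
  · -- case 1 : a is not an image
    push_neg at hA
    have classify' : ∀ i : Fin 3, f (inl i) = b ∨ G.degree (f (inl i)) = 3 := by
      intro i
      rcases classify f hf (inl i) with h | h | h
      · exact absurd h (hA _)
      · exact Or.inl h
      · exact Or.inr h
    have pair : ∀ i j : Fin 3, i ≠ j → G.degree (f (inl i)) = 3 →
        G.degree (f (inl j)) = 3 → False := by
      intro i j hij h3i h3j
      have nadj : ∀ k : Fin 3, G.degree (f (inl k)) = 3 → ¬ G.Adj a (f (inl k)) := by
        intro k h3 hadj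
        have : a ∈ G.neighborFinset (f (inl k)) := (mem_neighborFinset _ _ _).mpr (G.adj_symm hadj)
        rw [L2 f hf _ h3] at this
        obtain ⟨w, _, hwa⟩ := Finset.mem_image.mp this
        exact hA w hwa
      have := NN _ _ (hA _) (nadj i h3i) (hA _) (nadj j h3j)
      have := hf this
      simp only [inl.injEq] at this
      exact hij this
    have hbb : ∀ i j : Fin 3, f (inl i) = b → f (inl j) = b → i = j := by
      intro i j hi hj
      have := hf (hi.trans hj.symm)
      simpa using this
    rcases classify' 0 with h0 | h0 <;> rcases classify' 1 with h1 | h1 <;>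
      rcases classify' 2 with h2 | h2
    · exact absurd (hbb 0 1 h0 h1) (by decide)
    · exact absurd (hbb 0 1 h0 h1) (by decide)
    · exact absurd (hbb 0 2 h0 h2) (by decide)
    · exact pair 1 2 (by decide) h1 h2
    · exact absurd (hbb 1 2 h1 h2) (by decide)
    · exact pair 0 2 (by decide) h0 h2
    · exact pair 0 1 (by decide) h0 h1
    · exact pair 0 1 (by decide) h0 h1

/-- For every `n ≥ 7`, the sequence `(n−2, 4, 3⁵, 1^{n−7})` is not potentially
`K_{3,3}`-graphic. -/
theorem not_potentially_K33_special (n : ℕ) (hn : 7 ≤ n) :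
    ¬ PotentiallyGraphic K33
      ([n - 2, 4] ++ List.replicate 5 3 ++ List.replicate (n - 7) 1) := by
  rintro ⟨G, hds, f, hf⟩
  letI : DecidableRel G.Adj := Classical.decRel _
  have hN : ([n - 2, 4] ++ List.replicate 5 3 ++ List.replicate (n - 7) 1 : List ℕ).length = n := by
    simp [List.length_append, List.length_replicate]
    omega
  have hdeg : Multiset.map (fun v => G.degree v) Finset.univ.val
      = (([n - 2, 4] ++ List.replicate 5 3 ++ List.replicate (n - 7) 1 : List ℕ) : Multiset ℕ) := by
    rw [← hds]
    congr 1
    funext v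
    rw [Set.ncard_eq_toFinset_card']
    rfl
  exact main_contra n hn _ hN G hdeg f hf
end

section
/- Let n ≥ 6 and let π = (d_1, …, d_n) be a graphic sequence that is potentially K_{3,3}-graphic. Then for each i ∈ {1, 2}, if d_1 = n − i then d_{4−i} ≥ 4; that is, if d_1 = n−1 then d_3 ≥ 4, and if d_1 = n−2 then d_2 ≥ 4. -/
open Classical in
lemma sorted_getD_ge {l : List ℕ} (hs : l.Pairwise (· ≥ ·)) {k : ℕ} (hk : 1 ≤ k)
    (hcount : k ≤ l.countP (fun x => decide (4 ≤ x))) : 4 ≤ l.getD (k-1) 0 := by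
  have hlen : k - 1 < l.length := by
    have := l.countP_le_length (p := fun x => decide (4 ≤ x))
    omega
  rw [List.getD_eq_getElem _ _ hlen]
  have hsplit : l.countP (fun x => decide (4 ≤ x)) =
      (l.take (k-1)).countP (fun x => decide (4 ≤ x)) +
      (l.drop (k-1)).countP (fun x => decide (4 ≤ x)) := by
    rw [← List.countP_append, List.take_append_drop]
  have h1 : (l.take (k-1)).countP (fun x => decide (4 ≤ x)) ≤ k - 1 := by
    have h := (l.take (k-1)).countP_le_length (p := fun x => decide (4 ≤ x))
    have h' : (l.take (k-1)).length = min (k-1) l.length := List.length_take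
    omega
  have h2 : 0 < (l.drop (k-1)).countP (fun x => decide (4 ≤ x)) := by
    rw [hsplit] at hcount
    omega
  rw [List.countP_pos_iff] at h2
  obtain ⟨x, hx, hx4⟩ := h2
  have hdrop : l.drop (k-1) = l[k-1] :: l.drop k := by
    have hk1 : k - 1 + 1 = k := by omega
    rw [List.drop_eq_getElem_cons hlen, hk1]
  have hsd : (l.drop (k-1)).Pairwise (· ≥ ·) := hs.drop
  rw [hdrop] at hx hsd
  have hx4' : 4 ≤ x := by simpa using hx4
  rcases List.mem_cons.mp hx with rfl | hx
  · exact hx4'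
  · exact le_trans hx4' (List.rel_of_pairwise_cons hsd hx)

open Classical in
lemma aux_main {V : Type} [Fintype V] (G : SimpleGraph V) (u : V)
    (a b : Fin 3 → V)
    (hadj : ∀ j k, G.Adj (a j) (b k))
    (hainj : Function.Injective a)
    (hbinj : Function.Injective b)
    (hub : ∀ k, u ≠ b k)
    (i : ℕ) (hi : i = 1 ∨ i = 2)
    (hN : {v | v ≠ u ∧ ¬ G.Adj u v}.ncard ≤ i - 1)
    (hud : 4 ≤ (G.neighborSet u).ncard) :
    ∃ S : Finset V, 4 - i ≤ S.card ∧ ∀ v ∈ S, 4 ≤ (G.neighborSet v).ncard := by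
  classical
  set N : Set V := {v | v ≠ u ∧ ¬ G.Adj u v} with hNdef
  have hNfin : N.Finite := Set.toFinite _
  set NF : Finset V := hNfin.toFinset with hNFdef
  have hNFcard : NF.card ≤ i - 1 := by
    have : N.ncard = NF.card := Set.ncard_eq_toFinset_card N hNfin
    omega
  set A' : Finset V := (Finset.univ.image a) \ (insert u NF) with hA'def
  have hAcard : (Finset.univ.image a).card = 3 := by
    rw [Finset.card_image_of_injective _ hainj]; simp
  have hA'card : 3 - i ≤ A'.card := by
    have h1 := Finset.le_card_sdiff (insert u NF) (Finset.univ.image a)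
    have h2 : (insert u NF).card ≤ NF.card + 1 := Finset.card_insert_le _ _
    rw [hA'def]
    rcases hi with rfl | rfl <;> omega
  refine ⟨insert u A', ?_, ?_⟩
  · have hu : u ∉ A' := by simp [hA'def]
    rw [Finset.card_insert_of_notMem hu]
    rcases hi with rfl | rfl <;> omega
  · intro v hv
    rcases Finset.mem_insert.mp hv with rfl | hv
    · exact hud
    · simp only [hA'def, Finset.mem_sdiff, Finset.mem_image, Finset.mem_insert] at hv
      obtain ⟨⟨j, _, rfl⟩, hv2⟩ := hv
      push_neg at hv2
      obtain ⟨hne, hnotN⟩ := hv2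
      have hadjU : G.Adj u (a j) := by
        by_contra hc
        exact hnotN (by simp [hNFdef, Set.Finite.mem_toFinset, hNdef]; exact ⟨hne, hc⟩)
      -- neighbors of a j include u, b 0, b 1, b 2
      set T : Finset V := insert u {b 0, b 1, b 2} with hT
      have hTsub : (T : Set V) ⊆ G.neighborSet (a j) := by
        intro x hx
        simp only [hT, Finset.coe_insert, Set.mem_insert_iff, Finset.coe_pair,
          Finset.mem_coe, Finset.mem_insert, Finset.mem_singleton] at hx
        rcases hx with rfl | hx
        · exact hadjU.symm
        · have : x = b 0 ∨ x = b 1 ∨ x = b 2 := by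
            simpa using hx
          rcases this with rfl | rfl | rfl <;> exact hadj j _
      have hTcard : T.card = 4 := by
        have h01 : b 0 ≠ b 1 := fun h => by simpa using hbinj h
        have h02 : b 0 ≠ b 2 := fun h => by simpa using hbinj h
        have h12 : b 1 ≠ b 2 := fun h => by simpa using hbinj h
        rw [hT]
        rw [Finset.card_insert_of_notMem (by simp [hub 0, hub 1, hub 2])]
        rw [Finset.card_insert_of_notMem (by simp [h01, h02])]
        rw [Finset.card_insert_of_notMem (by simp [h12])]
        simp
      calc 4 = (T : Set V).ncard := by rw [Set.ncard_coe_finset, hTcard]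
        _ ≤ _ := Set.ncard_le_ncard hTsub (Set.toFinite _)

/-- Necessity of condition (2) in Theorem 3.1: if a graphic sequence with `n ≥ 6` terms
is potentially `K_{3,3}`-graphic, then `d₁ = n−1` implies `d₃ ≥ 4` and `d₁ = n−2`
implies `d₂ ≥ 4`. Here `π.getD (i-1) 0` is the `i`-th term `dᵢ`. -/
theorem K33_necessary_condition_2
    (n : ℕ) (hn : 6 ≤ n) (π : List ℕ) (hlen : π.length = n)
    (hsorted : π.Pairwise (· ≥ ·)) (hgraphic : IsGraphic π)
    (hpot : PotentiallyGraphic K33 π) :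
    ∀ i : ℕ, (i = 1 ∨ i = 2) → π.getD 0 0 = n - i → 4 ≤ π.getD (3 - i) 0 := by
  classical
  intro i hi hd1
  obtain ⟨G, hdeg, f, hf⟩ := hpot
  have hπ0 : 0 < π.length := by omega
  -- a vertex u of degree n - i
  have hmem : (n - i) ∈ (π : Multiset ℕ) := by
    rw [Multiset.mem_coe]
    have hm : π.getD 0 0 ∈ π := by
      rw [List.getD_eq_getElem _ _ hπ0]; exact List.getElem_mem _
    rwa [hd1] at hm
  rw [← hdeg] at hmem
  obtain ⟨u, -, hu⟩ := Multiset.mem_map.mp hmem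
  have hud4 : 4 ≤ (G.neighborSet u).ncard := by
    rw [hu]; rcases hi with rfl | rfl <;> omega
  -- at most i - 1 non-neighbors
  have hN : {v | v ≠ u ∧ ¬ G.Adj u v}.ncard ≤ i - 1 := by
    set N : Set (Fin π.length) := {v | v ≠ u ∧ ¬ G.Adj u v} with hNdef
    have hpart : ({u} : Set (Fin π.length)) ∪ G.neighborSet u ∪ N = Set.univ := by
      ext v
      simp only [Set.mem_union, Set.mem_singleton_iff, SimpleGraph.mem_neighborSet,
        Set.mem_univ, iff_true, hNdef, Set.mem_setOf_eq]
      tauto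
    have hd' : Disjoint ({u} : Set (Fin π.length)) (G.neighborSet u) := by
      rw [Set.disjoint_left]
      rintro v rfl hv
      exact G.irrefl hv
    have hd2 : Disjoint (({u} : Set (Fin π.length)) ∪ G.neighborSet u) N := by
      rw [Set.disjoint_left]
      rintro v (hv | hv) ⟨h1, h2⟩
      · exact h1 hv
      · exact h2 hv
    have e1 : (({u} : Set (Fin π.length)) ∪ G.neighborSet u ∪ N).ncard =
        (({u} : Set (Fin π.length)) ∪ G.neighborSet u).ncard + N.ncard :=
      Set.ncard_union_eq hd2 (Set.toFinite _) (Set.toFinite _)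
    have e2 : (({u} : Set (Fin π.length)) ∪ G.neighborSet u).ncard =
        1 + (G.neighborSet u).ncard :=
      by rw [Set.ncard_union_eq hd' (Set.toFinite _) (Set.toFinite _), Set.ncard_singleton]
    rw [hpart, e2, hu] at e1
    have hcardU : (Set.univ : Set (Fin π.length)).ncard = n := by
      rw [Set.ncard_univ, Nat.card_eq_fintype_card, Fintype.card_fin, hlen]
    rw [hcardU] at e1
    rcases hi with rfl | rfl <;> omega
  -- adjacency in the K33 copy
  have hadjK : ∀ j k : Fin 3, K33.Adj (Sum.inl j) (Sum.inr k) := by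
    intro j k
    simp [K33]
  -- get the finset S of 4 - i vertices of degree ≥ 4
  have hS : ∃ S : Finset (Fin π.length), 4 - i ≤ S.card ∧
      ∀ v ∈ S, 4 ≤ (G.neighborSet v).ncard := by
    by_cases hcase : ∀ k : Fin 3, u ≠ f (Sum.inr k)
    · exact aux_main G u (fun j => f (Sum.inl j)) (fun k => f (Sum.inr k))
        (fun j k => f.map_adj (hadjK j k))
        (hf.comp Sum.inl_injective) (hf.comp Sum.inr_injective)
        hcase i hi hN hud4
    · push_neg at hcase
      obtain ⟨k0, hk0⟩ := hcase
      have hub : ∀ k : Fin 3, u ≠ f (Sum.inl k) := by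
        intro k h
        rw [hk0] at h
        exact absurd (hf h) (by simp)
      exact aux_main G u (fun j => f (Sum.inr j)) (fun k => f (Sum.inl k))
        (fun j k => f.map_adj (hadjK k j).symm)
        (hf.comp Sum.inr_injective) (hf.comp Sum.inl_injective)
        hub i hi hN hud4
  obtain ⟨S, hScard, hSdeg⟩ := hS
  -- counting: π has at least 4 - i entries ≥ 4
  have hcount : 4 - i ≤ π.countP (fun x => decide (4 ≤ x)) := by
    have hsub : S.val.map (fun v => (G.neighborSet v).ncard) ≤
        Finset.univ.val.map (fun v => (G.neighborSet v).ncard) :=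
      Multiset.map_le_map (Finset.val_le_iff.mpr (Finset.subset_univ S))
    have h2 := Multiset.countP_le_of_le (p := fun x => 4 ≤ x) hsub
    have h1 : (S.val.map (fun v => (G.neighborSet v).ncard)).countP (fun x => 4 ≤ x)
        = S.card := by
      rw [Multiset.countP_eq_card.mpr]
      · simp
      · intro x hx
        obtain ⟨v, hv, rfl⟩ := Multiset.mem_map.mp hx
        exact hSdeg v hv
    rw [hdeg, h1, Multiset.coe_countP] at h2
    omega
  have hres := sorted_getD_ge hsorted (k := 4 - i)
    (by rcases hi with rfl | rfl <;> omega) hcount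
  have h34 : 3 - i = 4 - i - 1 := by omega
  rw [h34]
  exact hres
end
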